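/- arXiv:1705.00447 — 4 statements merged into one kernel-verified Lean document; each statement's English description precedes it below -/
import Mathlib

section
/- Let (A, 𝔪) be a Noetherian regular local ring, v a real-valued valuation of Frac(A) centered on A, and x_1, …, x_d a regular system of parameters of A such that the real numbers v(x_1), …, v(x_d) are linearly independent over ℤ (so distinct monomials in the x_i have distinct values). Then for every real m > 0, the valuation ideal 𝔞_m = {a ∈ A : v(a) ≥ m} ∪ {0} is generated by the monomials {x_1^{a_1}⋯x_d^{a_d} : a_i ∈ ℤ≥0, a_1·v(x_1) + ⋯ + a_d·v(x_d) ≥ m}. (Monomiality of valuation ideals, final assertion of Proposition 2.5.) -/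
set_option linter.unusedSectionVars false
set_option linter.unusedVariables false
set_option maxHeartbeats 1000000


open scoped TensorProduct

noncomputable section

namespace Paper

/-- Transcendence degree of an `R`-algebra `A`, as a cardinal: the supremum of cardinalities
of algebraically independent subsets of `A`. -/
noncomputable def trdeg (R A : Type*) [CommRing R] [CommRing A] [Algebra R A] : Cardinal :=
  ⨆ s : {s : Set A // AlgebraicIndependent R ((↑) : s → A)}, Cardinal.mk s.1

/-- A valuation of `K/k` with values in a totally ordered abelian group `Γ`:
`v` is only meaningful on nonzero elements of `K`. -/
structure ValG (k K Γ : Type*) [Field k] [Field K] [Algebra k K]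
    [AddCommGroup Γ] [LinearOrder Γ] [IsOrderedAddMonoid Γ] where
  v : K → Γ
  v_mul : ∀ x y : K, x ≠ 0 → y ≠ 0 → v (x * y) = v x + v y
  v_add : ∀ x y : K, x ≠ 0 → y ≠ 0 → x + y ≠ 0 → min (v x) (v y) ≤ v (x + y)
  v_const : ∀ c : k, c ≠ 0 → v (algebraMap k K c) = 0

/-- A real-valued valuation of `K/k`. -/
abbrev RealVal (k K : Type*) [Field k] [Field K] [Algebra k K] := ValG k K ℝ

namespace ValG

universe uk uK uG

variable {k : Type uk} {K : Type uK} {Γ : Type uG}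
variable [Field k] [Field K] [Algebra k K] [AddCommGroup Γ] [LinearOrder Γ] [IsOrderedAddMonoid Γ]
variable (w : ValG k K Γ)

/-- The valuation is nontrivial: its value group is not `0`. -/
def Nontriv : Prop := ∃ x : K, x ≠ 0 ∧ w.v x ≠ 0

/-- The value group of `w`, as a subgroup of `Γ` (the set of values on `K^×`,
which is a subgroup). -/
def valueGroup : AddSubgroup Γ := AddSubgroup.closure {g : Γ | ∃ x : K, x ≠ 0 ∧ w.v x = g}

/-- The rational rank of `w` : `dim_ℚ (ℚ ⊗_ℤ Γ_v)`. -/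
noncomputable def ratRank : Cardinal := Module.rank ℚ (ℚ ⊗[ℤ] ↥w.valueGroup)

lemma v_one : w.v 1 = 0 := by
  have h := w.v_mul 1 1 one_ne_zero one_ne_zero
  rw [one_mul] at h
  exact left_eq_add.mp h

/-- The valuation ring `R_v` of `w`, as a `k`-subalgebra of `K`. -/
def valuationSubring : Subalgebra k K where
  carrier := {x : K | x = 0 ∨ 0 ≤ w.v x}
  mul_mem' := by
    intro a b ha hb
    by_cases hab : a * b = 0
    · exact Or.inl hab
    · have ha0 : a ≠ 0 := left_ne_zero_of_mul hab
      have hb0 : b ≠ 0 := right_ne_zero_of_mul hab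
      rcases ha with rfl | ha
      · exact absurd rfl ha0
      rcases hb with rfl | hb
      · exact absurd rfl hb0
      exact Or.inr (by rw [w.v_mul a b ha0 hb0]; exact add_nonneg ha hb)
  one_mem' := Or.inr (le_of_eq w.v_one.symm)
  add_mem' := by
    intro a b ha hb
    by_cases hab : a + b = 0
    · exact Or.inl hab
    by_cases ha0 : a = 0
    · subst ha0; rw [zero_add] at hab ⊢; exact hb
    by_cases hb0 : b = 0
    · subst hb0; rw [add_zero] at hab ⊢; exact ha
    rcases ha with rfl | ha
    · exact absurd rfl ha0
    rcases hb with rfl | hb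
    · exact absurd rfl hb0
    exact Or.inr (le_trans (le_min ha hb) (w.v_add a b ha0 hb0 hab))
  zero_mem' := Or.inl rfl
  algebraMap_mem' := by
    intro r
    by_cases hr : r = 0
    · subst hr; exact Or.inl (map_zero _)
    · exact Or.inr (le_of_eq (w.v_const r hr).symm)

/-- The maximal ideal `𝔪_v` of the valuation ring. -/
def mIdeal : Ideal w.valuationSubring where
  carrier := {x : w.valuationSubring | (x : K) = 0 ∨ 0 < w.v (x : K)}
  zero_mem' := Or.inl rfl
  add_mem' := by
    rintro a b ha hb
    show ((a : K) + (b : K) = 0) ∨ 0 < w.v ((a : K) + (b : K))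
    by_cases hab : (a : K) + (b : K) = 0
    · exact Or.inl hab
    by_cases ha0 : (a : K) = 0
    · rw [ha0, zero_add] at hab ⊢; exact hb
    by_cases hb0 : (b : K) = 0
    · rw [hb0, add_zero] at hab ⊢; exact ha
    rcases ha with h | ha
    · exact absurd h ha0
    rcases hb with h | hb
    · exact absurd h hb0
    exact Or.inr (lt_of_lt_of_le (lt_min ha hb) (w.v_add _ _ ha0 hb0 hab))
  smul_mem' := by
    rintro c x hx
    show ((c : K) * (x : K) = 0) ∨ 0 < w.v ((c : K) * (x : K))
    by_cases hcx : (c : K) * (x : K) = 0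
    · exact Or.inl hcx
    have hc0 : (c : K) ≠ 0 := left_ne_zero_of_mul hcx
    have hx0 : (x : K) ≠ 0 := right_ne_zero_of_mul hcx
    rcases hx with h | hx
    · exact absurd h hx0
    rcases c.2 with h | hc
    · exact absurd h hc0
    refine Or.inr ?_
    rw [w.v_mul _ _ hc0 hx0]
    exact add_pos_of_nonneg_of_pos hc hx

/-- The residue field `κ_v` of `w` (as a ring). -/
def residue : Type _ := w.valuationSubring ⧸ w.mIdeal

noncomputable instance : CommRing w.residue :=
  inferInstanceAs (CommRing (w.valuationSubring ⧸ w.mIdeal))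

noncomputable instance : Algebra k w.residue :=
  inferInstanceAs (Algebra k (w.valuationSubring ⧸ w.mIdeal))

/-- The transcendence degree of the residue field of `w` over `k`. -/
noncomputable def resTrdeg : Cardinal := trdeg k w.residue

/-- `w` is an Abhyankar valuation: `rat.rk (v) + trdeg (κ_v / k) = trdeg (K/k)`. -/
def IsAbhyankar : Prop :=
  Cardinal.lift.{uK} w.ratRank + Cardinal.lift.{uG} w.resTrdeg =
    Cardinal.lift.{uG} (trdeg k K)

section Center

variable (A : Type*) [CommRing A] [Algebra A K]

/-- The valuation applied to an element of a subring `A` of `K`. -/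
def vA (a : A) : Γ := w.v (algebraMap A K a)

/-- `w` is centered on `Spec A`, i.e. `A ⊆ R_v`. -/
def CenteredOnSpec : Prop := ∀ a : A, a ≠ 0 → 0 ≤ w.vA A a

/-- `w` is centered on the local ring `A`, i.e. `A ⊆ R_v` and `𝔪_A = 𝔪_v ∩ A`. -/
def CenteredAt [IsLocalRing A] : Prop :=
  w.CenteredOnSpec A ∧
    ∀ a : A, a ∈ IsLocalRing.maximalIdeal A ↔ (a = 0 ∨ 0 < w.vA A a)

variable {A}
variable (hinj : Function.Injective (algebraMap A K)) (hc : w.CenteredOnSpec A)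

/-- The valuation ideal `𝔞_m(A) = {a ∈ A : v(a) ≥ m}`. -/
def valIdeal (m : Γ) : Ideal A where
  carrier := {a : A | a = 0 ∨ m ≤ w.vA A a}
  zero_mem' := Or.inl rfl
  add_mem' := by
    intro a b ha hb
    by_cases hab : a + b = 0
    · exact Or.inl hab
    by_cases ha0 : a = 0
    · subst ha0; rw [zero_add] at hab ⊢; exact hb
    by_cases hb0 : b = 0
    · subst hb0; rw [add_zero] at hab ⊢; exact ha
    rcases ha with rfl | ha
    · exact absurd rfl ha0
    rcases hb with rfl | hb
    · exact absurd rfl hb0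
    refine Or.inr ?_
    have hia : algebraMap A K a ≠ 0 := fun h => ha0 (hinj (h.trans (map_zero _).symm))
    have hib : algebraMap A K b ≠ 0 := fun h => hb0 (hinj (h.trans (map_zero _).symm))
    have hiab : algebraMap A K a + algebraMap A K b ≠ 0 := by
      rw [← map_add]
      exact fun h => hab (hinj (h.trans (map_zero _).symm))
    have hmin := w.v_add _ _ hia hib hiab
    refine le_trans (le_min ha hb) ?_
    simpa [vA, map_add] using hmin
  smul_mem' := by
    intro c a ha
    rw [smul_eq_mul]
    by_cases hca : c * a = 0
    · exact Or.inl hca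
    have hc0 : c ≠ 0 := left_ne_zero_of_mul hca
    have ha0 : a ≠ 0 := right_ne_zero_of_mul hca
    rcases ha with rfl | ha
    · exact absurd rfl ha0
    refine Or.inr ?_
    have hic : algebraMap A K c ≠ 0 := fun h => hc0 (hinj (h.trans (map_zero _).symm))
    have hia : algebraMap A K a ≠ 0 := fun h => ha0 (hinj (h.trans (map_zero _).symm))
    have hm : w.vA A (c * a) = w.vA A c + w.vA A a := by
      simpa [vA, map_mul] using w.v_mul _ _ hic hia
    rw [hm]
    exact le_trans ha (le_add_of_nonneg_left (hc c hc0))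

/-- The center of `w` on `Spec A` : the prime ideal `{a ∈ A : v(a) > 0}`. -/
def centerIdeal : Ideal A where
  carrier := {a : A | a = 0 ∨ 0 < w.vA A a}
  zero_mem' := Or.inl rfl
  add_mem' := by
    intro a b ha hb
    by_cases hab : a + b = 0
    · exact Or.inl hab
    by_cases ha0 : a = 0
    · subst ha0; rw [zero_add] at hab ⊢; exact hb
    by_cases hb0 : b = 0
    · subst hb0; rw [add_zero] at hab ⊢; exact ha
    rcases ha with rfl | ha
    · exact absurd rfl ha0
    rcases hb with rfl | hb
    · exact absurd rfl hb0
    refine Or.inr ?_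
    have hia : algebraMap A K a ≠ 0 := fun h => ha0 (hinj (h.trans (map_zero _).symm))
    have hib : algebraMap A K b ≠ 0 := fun h => hb0 (hinj (h.trans (map_zero _).symm))
    have hiab : algebraMap A K a + algebraMap A K b ≠ 0 := by
      rw [← map_add]
      exact fun h => hab (hinj (h.trans (map_zero _).symm))
    have hmin := w.v_add _ _ hia hib hiab
    refine lt_of_lt_of_le (lt_min ha hb) ?_
    simpa [vA, map_add] using hmin
  smul_mem' := by
    intro c a ha
    rw [smul_eq_mul]
    by_cases hca : c * a = 0
    · exact Or.inl hca
    have hc0 : c ≠ 0 := left_ne_zero_of_mul hca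
    have ha0 : a ≠ 0 := right_ne_zero_of_mul hca
    rcases ha with rfl | ha
    · exact absurd rfl ha0
    refine Or.inr ?_
    have hic : algebraMap A K c ≠ 0 := fun h => hc0 (hinj (h.trans (map_zero _).symm))
    have hia : algebraMap A K a ≠ 0 := fun h => ha0 (hinj (h.trans (map_zero _).symm))
    have hm : w.vA A (c * a) = w.vA A c + w.vA A a := by
      simpa [vA, map_mul] using w.v_mul _ _ hic hia
    rw [hm]
    exact add_pos_of_nonneg_of_pos (hc c hc0) ha

end Center

end ValG

section TestIdeals

variable (R : Type*) [CommRing R] (p : ℕ)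

/-- `R` is F-finite: it is a finitely generated module over itself via the Frobenius,
i.e. a finite set `s` spans `R` over the subring of `p`-th powers. -/
def FFinite : Prop :=
  ∃ s : Finset R, ∀ x : R, ∃ c : R → R, x = s.sum fun y => c y ^ p * y

/-- `φ : R → R` is a `p^{-e}`-linear map, i.e. `φ (r^{p^e} x) = r * φ x`. -/
def PLinear (e : ℕ) (φ : R →+ R) : Prop := ∀ r x : R, φ (r ^ p ^ e * x) = r * φ x

/-- `J` satisfies the test-ideal closure condition for the pair `(R, 𝔞^t)` :
for every `e ≥ 1` and every `p^{-e}`-linear map `φ`, `φ(J · 𝔞^{⌈t(p^e - 1)⌉}) ⊆ J`. -/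
def TestClosed (𝔞 : Ideal R) (t : ℝ) (J : Ideal R) : Prop :=
  ∀ e : ℕ, 0 < e → ∀ φ : R →+ R, PLinear R p e φ →
    ∀ z ∈ J * 𝔞 ^ ⌈t * ((p : ℝ) ^ e - 1)⌉₊, φ z ∈ J

/-- `τ` is the test ideal `τ(R, 𝔞^t)` : the smallest nonzero ideal satisfying
the test-ideal closure condition. -/
def IsTestIdeal (𝔞 : Ideal R) (t : ℝ) (τ : Ideal R) : Prop :=
  τ ≠ ⊥ ∧ TestClosed R p 𝔞 t τ ∧
    ∀ J : Ideal R, J ≠ ⊥ → TestClosed R p 𝔞 t J → τ ≤ J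

/-- `T` is the `m`-th asymptotic test ideal `τ_m(R, 𝔞_•)` of a graded family `a` of ideals
indexed by `Φ ⊆ ℝ` : it equals `τ(R, 𝔞_{ℓm}^{1/ℓ})` for some `ℓ` and contains
`τ(R, 𝔞_{ℓm}^{1/ℓ})` for every `ℓ`. -/
def IsAsympTestIdeal (Φ : Set ℝ) (a : ℝ → Ideal R) (m : ℝ) (T : Ideal R) : Prop :=
  (∃ ℓ : ℕ, 0 < ℓ ∧ ((ℓ : ℝ) * m) ∈ Φ ∧ IsTestIdeal R p (a ((ℓ : ℝ) * m)) (1 / (ℓ : ℝ)) T) ∧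
    ∀ ℓ : ℕ, 0 < ℓ → ((ℓ : ℝ) * m) ∈ Φ →
      ∀ J : Ideal R, IsTestIdeal R p (a ((ℓ : ℝ) * m)) (1 / (ℓ : ℝ)) J → J ≤ T

end TestIdeals

section Regular

/-- A Noetherian local ring is regular if its maximal ideal is generated by
`dim A` many elements. -/
def IsRegLocal (A : Type*) [CommRing A] [IsLocalRing A] : Prop :=
  IsNoetherianRing A ∧
    ∃ (n : ℕ) (x : Fin n → A), Ideal.span (Set.range x) = IsLocalRing.maximalIdeal A ∧
      ringKrullDim A = n

/-- A ring is regular if it is Noetherian and all of its localizations at primes are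
regular local rings. -/
def IsRegRing (A : Type*) [CommRing A] : Prop :=
  IsNoetherianRing A ∧
    ∀ (P : Ideal A) (_ : P.IsPrime), IsRegLocal (Localization.AtPrime P)

end Regular

universe uE

/-- `B` is essentially étale over `A` : formally étale, and a localization of a finitely
presented `A`-algebra. -/
def EssentiallyEtale (A B : Type uE) [CommRing A] [CommRing B] [Algebra A B] : Prop :=
  Algebra.FormallyEtale A B ∧
    ∃ (C : Type uE) (_ : CommRing C) (_ : Algebra A C) (_ : Algebra C B)
      (_ : IsScalarTower A C B) (S : Submonoid C),
      Algebra.FinitePresentation A C ∧ IsLocalization S B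

end Paper
namespace Paper

/-- A real-valued valuation of a field `K` (no base field). -/
structure RealValF (K : Type*) [Field K] where
  v : K → ℝ
  v_mul : ∀ x y : K, x ≠ 0 → y ≠ 0 → v (x * y) = v x + v y
  v_add : ∀ x y : K, x ≠ 0 → y ≠ 0 → x + y ≠ 0 → min (v x) (v y) ≤ v (x + y)

end Paper

open Paper


namespace Paper
namespace Prop25

variable {K A : Type*} [Field K] [CommRing A] [IsDomain A]
  [Algebra A K] [IsFractionRing A K]

/-- The value of an element of `A` under a real-valued valuation of `K`. -/
noncomputable def uv (w : RealValF K) (a : A) : ℝ := w.v (algebraMap A K a)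

variable (w : RealValF K)

lemma map_ne (w : RealValF K) {a : A} (ha : a ≠ 0) : algebraMap A K a ≠ 0 :=
  (map_ne_zero_iff _ (IsFractionRing.injective A K)).2 ha

lemma uv_mul {a b : A} (ha : a ≠ 0) (hb : b ≠ 0) : uv w (a * b) = uv w a + uv w b := by
  unfold uv
  rw [map_mul]
  exact w.v_mul _ _ (map_ne w ha) (map_ne w hb)

lemma uv_add_min {a b : A} (ha : a ≠ 0) (hb : b ≠ 0) (hab : a + b ≠ 0) :
    min (uv w a) (uv w b) ≤ uv w (a + b) := by
  unfold uv
  rw [map_add]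
  exact w.v_add _ _ (map_ne w ha) (map_ne w hb) (by rw [← map_add]; exact map_ne w hab)

lemma uv_one : uv w (1 : A) = 0 := by
  have h := uv_mul w (one_ne_zero (α := A)) (one_ne_zero (α := A))
  rw [mul_one] at h
  linarith

lemma uv_neg {a : A} (ha : a ≠ 0) : uv w (-a) = uv w a := by
  have hm1 : (-1 : A) ≠ 0 := by simp
  have h1 := uv_mul w hm1 hm1
  rw [neg_one_mul, neg_neg, uv_one] at h1
  have h2 : uv w (-1 : A) = 0 := by linarith
  have h3 := uv_mul w hm1 ha
  rw [neg_one_mul, h2, zero_add] at h3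
  exact h3

lemma uv_pow {a : A} (ha : a ≠ 0) (n : ℕ) : uv w (a ^ n) = n * uv w a := by
  induction n with
  | zero => simpa using uv_one w
  | succ n ih =>
    rw [pow_succ, uv_mul w (pow_ne_zero _ ha) ha, ih]
    push_cast
    ring

lemma uv_sub_min {a b : A} (ha : a ≠ 0) (hb : b ≠ 0) (hab : a - b ≠ 0) :
    min (uv w a) (uv w b) ≤ uv w (a - b) := by
  have := uv_add_min w ha (neg_ne_zero.2 hb) (by rw [← sub_eq_add_neg]; exact hab)
  rw [uv_neg w hb] at this
  rw [sub_eq_add_neg]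
  exact this

lemma uv_add_eq_min {a b : A} (ha : a ≠ 0) (hb : b ≠ 0) (hne : uv w a ≠ uv w b) :
    a + b ≠ 0 ∧ uv w (a + b) = min (uv w a) (uv w b) := by
  have hab : a + b ≠ 0 := by
    intro h
    have hb' : b = -a := by linear_combination h
    rw [hb', uv_neg w ha] at hne
    exact hne rfl
  refine ⟨hab, le_antisymm ?_ (uv_add_min w ha hb hab)⟩
  by_contra hlt
  push_neg at hlt
  rcases lt_or_gt_of_ne hne with h | h
  · -- uv a < uv b ; a = (a+b) - b
    have h1 : a = (a + b) - b := by ring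
    have h2 := uv_sub_min w hab hb (by rw [← h1]; exact ha)
    rw [← h1] at h2
    have : min (uv w a) (uv w b) = uv w a := min_eq_left h.le
    rw [this] at hlt
    have : min (uv w (a + b)) (uv w b) > uv w a := lt_min hlt h
    linarith
  · have h1 : b = (a + b) - a := by ring
    have h2 := uv_sub_min w hab ha (by rw [← h1]; exact hb)
    rw [← h1] at h2
    have : min (uv w a) (uv w b) = uv w b := min_eq_right h.le
    rw [this] at hlt
    have : min (uv w (a + b)) (uv w a) > uv w b := lt_min hlt h
    linarith


lemma uv_prod {ι : Type*} (T : Finset ι) (y : ι → A) (h0 : ∀ i ∈ T, y i ≠ 0) :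
    uv w (∏ i ∈ T, y i) = ∑ i ∈ T, uv w (y i) := by
  classical
  induction T using Finset.cons_induction with
  | empty => simpa using uv_one w
  | cons a s ha ih =>
    rw [Finset.prod_cons, Finset.sum_cons,
      uv_mul w (h0 a (Finset.mem_cons_self a s))
        (Finset.prod_ne_zero_iff.2 fun i hi => h0 i (Finset.mem_cons_of_mem hi)),
      ih (fun i hi => h0 i (Finset.mem_cons_of_mem hi))]

lemma sum_lower {ι : Type*} (T : Finset ι) (y : ι → A) (b : ℝ)
    (h : ∀ i ∈ T, y i = 0 ∨ b ≤ uv w (y i)) :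
    (∑ i ∈ T, y i) = 0 ∨ b ≤ uv w (∑ i ∈ T, y i) := by
  classical
  induction T using Finset.cons_induction with
  | empty => left; simp
  | cons a s ha ih =>
    rw [Finset.sum_cons]
    have hs := ih (fun i hi => h i (Finset.mem_cons_of_mem hi))
    by_cases hya : y a = 0
    · rw [hya, zero_add]; exact hs
    have hA : b ≤ uv w (y a) := (h a (Finset.mem_cons_self a s)).resolve_left hya
    by_cases hS0 : (∑ i ∈ s, y i) = 0
    · rw [hS0, add_zero]; right; exact hA
    have hs' : b ≤ uv w (∑ i ∈ s, y i) := hs.resolve_left hS0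
    by_cases hz : y a + ∑ i ∈ s, y i = 0
    · left; exact hz
    · right; exact le_trans (le_min hA hs') (uv_add_min w hya hS0 hz)

lemma sum_distinct {ι : Type*} (T : Finset ι) (y : ι → A) (V : ι → ℝ) (hne : T.Nonempty)
    (h0 : ∀ i ∈ T, y i ≠ 0) (hv : ∀ i ∈ T, uv w (y i) = V i)
    (hinj : ∀ i ∈ T, ∀ j ∈ T, V i = V j → i = j) :
    (∑ i ∈ T, y i) ≠ 0 ∧ ∃ i₀ ∈ T, uv w (∑ i ∈ T, y i) = V i₀ ∧ ∀ i ∈ T, V i₀ ≤ V i := by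
  classical
  induction T using Finset.cons_induction with
  | empty => exact absurd hne (by simp)
  | cons a s ha ih =>
    rw [Finset.sum_cons]
    by_cases hs : s.Nonempty
    · obtain ⟨hS, i₀, hi₀, hval, hmin⟩ := ih hs
        (fun i hi => h0 i (Finset.mem_cons_of_mem hi))
        (fun i hi => hv i (Finset.mem_cons_of_mem hi))
        (fun i hi j hj => hinj i (Finset.mem_cons_of_mem hi) j (Finset.mem_cons_of_mem hj))
      have hya : y a ≠ 0 := h0 a (Finset.mem_cons_self a s)
      have hvne : uv w (y a) ≠ uv w (∑ i ∈ s, y i) := by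
        rw [hval, hv a (Finset.mem_cons_self a s)]
        intro hEq
        exact ha (hinj a (Finset.mem_cons_self a s) i₀ (Finset.mem_cons_of_mem hi₀) hEq ▸ hi₀)
      obtain ⟨hz, hm⟩ := uv_add_eq_min w hya hS hvne
      refine ⟨hz, ?_⟩
      rw [hm, hval, hv a (Finset.mem_cons_self a s)]
      rcases le_total (V a) (V i₀) with hle | hle
      · refine ⟨a, Finset.mem_cons_self a s, min_eq_left hle, ?_⟩
        intro i hi
        rcases Finset.mem_cons.1 hi with rfl | hi
        · exact le_refl _
        · exact le_trans hle (hmin i hi)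
      · refine ⟨i₀, Finset.mem_cons_of_mem hi₀, min_eq_right hle, ?_⟩
        intro i hi
        rcases Finset.mem_cons.1 hi with rfl | hi
        · exact hle
        · exact hmin i hi
    · rw [Finset.not_nonempty_iff_eq_empty] at hs
      subst hs
      simp only [Finset.sum_empty, add_zero]
      exact ⟨h0 a (Finset.mem_cons_self a _),
        a, Finset.mem_cons_self a _, hv a (Finset.mem_cons_self a _), by
          intro i hi
          rcases Finset.mem_cons.1 hi with rfl | hi
          · exact le_refl _
          · exact absurd hi (by simp)⟩


lemma expand {d : ℕ} (x : Fin d → A) (N : ℕ) :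
    ∀ r ∈ (Ideal.span (Set.range x)) ^ N, ∃ T : Finset (Fin d → ℕ), ∃ c : (Fin d → ℕ) → A,
      (∀ α ∈ T, (∑ i, α i) = N) ∧ r = ∑ α ∈ T, c α * ∏ i, x i ^ α i := by
  classical
  induction N with
  | zero =>
    intro r _
    refine ⟨{fun _ => 0}, fun _ => r, by simp, by simp⟩
  | succ N ih =>
    have Padd : ∀ u v : A,
        (∃ T : Finset (Fin d → ℕ), ∃ c : (Fin d → ℕ) → A,
          (∀ α ∈ T, (∑ i, α i) = N + 1) ∧ u = ∑ α ∈ T, c α * ∏ i, x i ^ α i) →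
        (∃ T : Finset (Fin d → ℕ), ∃ c : (Fin d → ℕ) → A,
          (∀ α ∈ T, (∑ i, α i) = N + 1) ∧ v = ∑ α ∈ T, c α * ∏ i, x i ^ α i) →
        (∃ T : Finset (Fin d → ℕ), ∃ c : (Fin d → ℕ) → A,
          (∀ α ∈ T, (∑ i, α i) = N + 1) ∧ u + v = ∑ α ∈ T, c α * ∏ i, x i ^ α i) := by
      rintro u v ⟨T, c, hd, rfl⟩ ⟨T', c', hd', rfl⟩
      refine ⟨T ∪ T', fun α => (if α ∈ T then c α else 0) + (if α ∈ T' then c' α else 0),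
        ?_, ?_⟩
      · intro α hα
        rcases Finset.mem_union.1 hα with h | h
        exacts [hd α h, hd' α h]
      · have e1 : ∀ (S : Finset (Fin d → ℕ)) (cc : (Fin d → ℕ) → A), S ⊆ T ∪ T' →
            (∑ α ∈ T ∪ T', if α ∈ S then cc α * ∏ i, x i ^ α i else 0)
              = ∑ α ∈ S, cc α * ∏ i, x i ^ α i := by
          intro S cc hS
          rw [Finset.sum_ite_mem]
          congr 1
          exact Finset.inter_eq_right.2 hS
        simp only [add_mul, Finset.sum_add_distrib, ite_mul, zero_mul]
        rw [e1 T c Finset.subset_union_left, e1 T' c' Finset.subset_union_right]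
    intro r hr
    rw [pow_succ] at hr
    refine Submodule.mul_induction_on hr ?_ Padd
    intro p hp q hq
    obtain ⟨T, c, hdeg, rfl⟩ := ih p hp
    obtain ⟨b, rfl⟩ := (Submodule.mem_span_range_iff_exists_fun A).1 hq
    have single : ∀ i : Fin d,
        ∃ T' : Finset (Fin d → ℕ), ∃ c' : (Fin d → ℕ) → A,
          (∀ α ∈ T', (∑ j, α j) = N + 1) ∧
          (∑ α ∈ T, c α * ∏ j, x j ^ α j) * (b i • x i) = ∑ α ∈ T', c' α * ∏ j, x j ^ α j := by
      intro i
      set e : Fin d → ℕ := Pi.single i 1 with he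
      have hsume : ∑ j, e j = 1 := by
        simp [he, Pi.single_apply]
      refine ⟨T.image (fun α => α + e), fun β => b i * c (β - e), ?_, ?_⟩
      · intro β hβ
        obtain ⟨α, hα, rfl⟩ := Finset.mem_image.1 hβ
        have h2 : ∑ j, (α + e) j = (∑ j, α j) + ∑ j, e j := by
          simp [Finset.sum_add_distrib]
        rw [h2, hdeg α hα, hsume]
      · have hinj : Function.Injective (fun α : Fin d → ℕ => α + e) := by
          intro a b h
          funext j
          have := congrFun h j
          simpa using this
        rw [Finset.sum_image (fun a _ b _ h => hinj h)]
        rw [Finset.sum_mul]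
        refine Finset.sum_congr rfl ?_
        intro α hα
        have hsub : (α + e) - e = α := by
          funext j; simp
        have hM : ∏ j, x j ^ (α + e) j = (∏ j, x j ^ α j) * x i := by
          have h3 : ∀ j, x j ^ (α + e) j = x j ^ α j * x j ^ e j := by
            intro j; rw [Pi.add_apply, pow_add]
          rw [Finset.prod_congr rfl (fun j _ => h3 j), Finset.prod_mul_distrib]
          congr 1
          rw [Finset.prod_eq_single i (fun j _ hj => by simp [he, Pi.single_apply, hj])
            (by simp)]
          simp [he]
        show (c α * ∏ j, x j ^ α j) * b i • x i
            = (b i * c ((α + e) - e)) * ∏ j, x j ^ (α + e) j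
        rw [hsub, hM, smul_eq_mul]
        ring
    have hms : (∑ α ∈ T, c α * ∏ j, x j ^ α j) * (∑ i, b i • x i)
        = ∑ i, (∑ α ∈ T, c α * ∏ j, x j ^ α j) * (b i • x i) := by
      rw [Finset.mul_sum]
    rw [hms]
    refine Finset.sum_induction _ _ Padd ⟨∅, fun _ => 0, by simp, by simp⟩ ?_
    intro i _
    exact single i


/-- The monomial `x^α`. -/
def Mon {d : ℕ} (x : Fin d → A) (α : Fin d → ℕ) : A := ∏ i, x i ^ α i

/-- The value of the monomial `x^α`. -/
noncomputable def Vval {d : ℕ} (w : RealValF K) (x : Fin d → A) (α : Fin d → ℕ) : ℝ :=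
  ∑ i, (α i : ℝ) * uv w (x i)

lemma Mon_mem {d : ℕ} (x : Fin d → A) (α : Fin d → ℕ) :
    Mon x α ∈ (Ideal.span (Set.range x)) ^ (∑ i, α i) := by
  rw [← Finset.prod_pow_eq_pow_sum]
  exact Ideal.prod_mem_prod fun i _ =>
    Ideal.pow_mem_pow (Ideal.subset_span (Set.mem_range_self i)) _

theorem main_lemma [IsLocalRing A]
    (hc1 : ∀ a : A, a ≠ 0 → 0 ≤ uv w a)
    (hc2 : ∀ a : A, a ∈ IsLocalRing.maximalIdeal A ↔ (a = 0 ∨ 0 < uv w a))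
    {d : ℕ} (x : Fin d → A)
    (hx : Ideal.span (Set.range x) = IsLocalRing.maximalIdeal A)
    (hind : ∀ c : Fin d → ℤ, (∑ i, (c i : ℝ) * uv w (x i)) = 0 → c = 0)
    (m : ℝ) (hm : 0 < m) :
    {a : A | a = 0 ∨ m ≤ uv w a} =
      ↑(Ideal.span {z : A | ∃ a : Fin d → ℕ, m ≤ Vval w x a ∧ z = Mon x a}) := by
  classical
  set I : Ideal A := Ideal.span {z : A | ∃ a : Fin d → ℕ, m ≤ Vval w x a ∧ z = Mon x a}
    with hI
  -- membership in the span translates the center condition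
  have hc2' : ∀ a : A, a ∈ Ideal.span (Set.range x) ↔ (a = 0 ∨ 0 < uv w a) := by
    intro a; rw [hx]; exact hc2 a
  -- units have value zero
  have huvunit : ∀ a : A, a ≠ 0 → a ∉ Ideal.span (Set.range x) → uv w a = 0 := by
    intro a ha hmem
    have h1 := hc1 a ha
    have h2 : ¬(a = 0 ∨ 0 < uv w a) := fun h => hmem ((hc2' a).2 h)
    push_neg at h2
    linarith [h2.2]
  -- injectivity of monomial values
  have Vinj : ∀ α β : Fin d → ℕ, Vval w x α = Vval w x β → α = β := by
    intro α β h
    have h0 : (∑ i, (((α i : ℤ) - (β i : ℤ) : ℤ) : ℝ) * uv w (x i)) = 0 := by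
      push_cast
      simp only [sub_mul]
      rw [Finset.sum_sub_distrib]
      have := h
      unfold Vval at this
      linarith [this]
    have := hind (fun i => (α i : ℤ) - (β i : ℤ)) h0
    funext i
    have hi := congrFun this i
    simp only [Pi.zero_apply, sub_eq_zero] at hi
    exact_mod_cast hi
  -- nonzero monomials: variables occurring are nonzero
  have hxne : ∀ α : Fin d → ℕ, Mon x α ≠ 0 → ∀ i, α i ≠ 0 → x i ≠ 0 := by
    intro α hα i hi hxi
    apply hα
    rw [Mon]
    apply Finset.prod_eq_zero (Finset.mem_univ i)
    rw [hxi, zero_pow hi]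
  -- value of a nonzero monomial
  have huvM : ∀ α : Fin d → ℕ, Mon x α ≠ 0 → uv w (Mon x α) = Vval w x α := by
    intro α hα
    have h0 : ∀ i ∈ Finset.univ, x i ^ α i ≠ 0 := by
      intro i _
      intro hz
      exact hα (by rw [Mon]; exact Finset.prod_eq_zero (Finset.mem_univ i) hz)
    rw [Mon, uv_prod w _ _ h0, Vval]
    refine Finset.sum_congr rfl ?_
    intro i _
    by_cases hai : α i = 0
    · rw [hai, pow_zero, uv_one w]; simp
    · exact uv_pow w (hxne α hα i hai) (α i)
  -- the uniform lower bound ε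
  obtain ⟨ε, hε, hεle⟩ : ∃ ε : ℝ, 0 < ε ∧ ∀ i, x i ≠ 0 → ε ≤ uv w (x i) := by
    by_cases hF : (Finset.univ.filter (fun i : Fin d => x i ≠ 0)).Nonempty
    · refine ⟨(Finset.univ.filter (fun i : Fin d => x i ≠ 0)).inf' hF (fun i => uv w (x i)),
        (Finset.lt_inf'_iff hF).2 ?_, ?_⟩
      · intro i hi
        have hxi : x i ≠ 0 := (Finset.mem_filter.1 hi).2
        have : x i ∈ Ideal.span (Set.range x) := Ideal.subset_span (Set.mem_range_self i)
        rcases (hc2' _).1 this with h | h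
        · exact absurd h hxi
        · exact h
      · intro i hi
        exact Finset.inf'_le _ (Finset.mem_filter.2 ⟨Finset.mem_univ i, hi⟩)
    · exact ⟨1, one_pos, fun i hi => absurd
        ⟨i, Finset.mem_filter.2 ⟨Finset.mem_univ i, hi⟩⟩ hF⟩
  -- degree lower bound for monomial values
  have hVlb : ∀ α : Fin d → ℕ, Mon x α ≠ 0 → ((∑ i, α i : ℕ) : ℝ) * ε ≤ Vval w x α := by
    intro α hα
    have : ∀ i ∈ Finset.univ, (α i : ℝ) * ε ≤ (α i : ℝ) * uv w (x i) := by
      intro i _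
      by_cases hai : α i = 0
      · rw [hai]; simp
      · exact mul_le_mul_of_nonneg_left (hεle i (hxne α hα i hai)) (Nat.cast_nonneg _)
    calc ((∑ i, α i : ℕ) : ℝ) * ε = ∑ i, (α i : ℝ) * ε := by
          rw [← Finset.sum_mul]; push_cast; ring
      _ ≤ ∑ i, (α i : ℝ) * uv w (x i) := Finset.sum_le_sum this
      _ = Vval w x α := rfl
  -- monomials of degree N lie in J^N
  have hMdeg : ∀ α : Fin d → ℕ, Mon x α ∈ (Ideal.span (Set.range x)) ^ (∑ i, α i) :=
    fun α => Mon_mem x α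
  -- elements of I have value ≥ m
  have hspanI : ∀ b ∈ I, b = 0 ∨ m ≤ uv w b := by
    intro b hb
    rw [hI] at hb
    refine Submodule.span_induction ?_ ?_ ?_ ?_ hb
    · rintro z ⟨α, hVα, rfl⟩
      by_cases hz : Mon x α = 0
      · exact Or.inl hz
      · exact Or.inr (by rw [huvM α hz]; exact hVα)
    · exact Or.inl rfl
    · intro a b _ _ pa pb
      by_cases ha0 : a = 0
      · subst ha0; simpa using pb
      by_cases hb0 : b = 0
      · subst hb0; simpa using pa
      have pa' := pa.resolve_left ha0
      have pb' := pb.resolve_left hb0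
      by_cases hab : a + b = 0
      · exact Or.inl hab
      · exact Or.inr (le_trans (le_min pa' pb') (uv_add_min w ha0 hb0 hab))
    · intro r a _ pa
      rw [smul_eq_mul]
      by_cases hr : r = 0
      · rw [hr, zero_mul]; exact Or.inl rfl
      by_cases ha0 : a = 0
      · rw [ha0, mul_zero]; exact Or.inl rfl
      have pa' := pa.resolve_left ha0
      right
      rw [uv_mul w hr ha0]
      linarith [hc1 r hr]
  -- value predicate is stable under subtraction
  have psub : ∀ r b : A, (r = 0 ∨ m ≤ uv w r) → (b = 0 ∨ m ≤ uv w b) →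
      (r - b = 0 ∨ m ≤ uv w (r - b)) := by
    intro r b hr hb
    by_cases hz : r - b = 0
    · exact Or.inl hz
    right
    by_cases hr0 : r = 0
    · subst hr0
      rw [zero_sub] at hz ⊢
      have hb0 : b ≠ 0 := fun h => hz (by rw [h, neg_zero])
      rw [uv_neg w hb0]
      exact hb.resolve_left hb0
    by_cases hb0 : b = 0
    · subst hb0; rw [sub_zero]; exact hr.resolve_left hr0
    exact le_trans (le_min (hr.resolve_left hr0) (hb.resolve_left hb0)) (uv_sub_min w hr0 hb0 hz)
  -- main structural lemma: the value of a nonzero element of `J^j` is a monomial value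
  have mono_val : ∀ n j : ℕ, ∀ h : A, h ∈ (Ideal.span (Set.range x)) ^ j → h ≠ 0 →
      uv w h < ((j : ℝ) + (n : ℝ)) * ε →
      ∃ α : Fin d → ℕ, j ≤ ∑ i, α i ∧ uv w h = Vval w x α := by
    intro n
    induction n with
    | zero =>
      intro j h hmem hne hlt
      exfalso
      obtain ⟨T, c, hdeg, heq⟩ := expand x j h hmem
      have heq' : h = ∑ α ∈ T, c α * Mon x α := heq
      have hlow : ∀ α ∈ T, c α * Mon x α = 0 ∨ (j : ℝ) * ε ≤ uv w (c α * Mon x α) := by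
        intro α hα
        by_cases hz : c α * Mon x α = 0
        · exact Or.inl hz
        right
        have hcne : c α ≠ 0 := left_ne_zero_of_mul hz
        have hMne : Mon x α ≠ 0 := right_ne_zero_of_mul hz
        rw [uv_mul w hcne hMne, huvM α hMne]
        have h2 := hVlb α hMne
        rw [hdeg α hα] at h2
        linarith [hc1 (c α) hcne]
      rcases sum_lower w T (fun α => c α * Mon x α) ((j:ℝ) * ε) hlow with h0 | hge
      · exact hne (by rw [heq']; exact h0)
      · rw [← heq'] at hge
        push_cast at hlt
        linarith
    | succ n ihn =>
      intro j h hmem hne hlt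
      obtain ⟨T, c, hdeg, heq⟩ := expand x j h hmem
      have heq' : h = ∑ α ∈ T, c α * Mon x α := heq
      set T₁ := T.filter
        (fun α => c α * Mon x α ≠ 0 ∧ c α ∉ Ideal.span (Set.range x)) with hT₁
      set h' := ∑ α ∈ T.filter
        (fun α => ¬(c α * Mon x α ≠ 0 ∧ c α ∉ Ideal.span (Set.range x))), c α * Mon x α
        with hh'def
      have hsplit : h = (∑ α ∈ T₁, c α * Mon x α) + h' := by
        rw [hT₁, hh'def, Finset.sum_filter_add_sum_filter_not]
        exact heq'
      have hh'mem : h' ∈ (Ideal.span (Set.range x)) ^ (j + 1) := by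
        rw [hh'def]
        refine Submodule.sum_mem _ ?_
        intro α hα
        have hcond := (Finset.mem_filter.1 hα).2
        push_neg at hcond
        by_cases hz : c α * Mon x α = 0
        · rw [hz]; exact Submodule.zero_mem _
        · have hcm : c α ∈ Ideal.span (Set.range x) := hcond hz
          have hMj : Mon x α ∈ (Ideal.span (Set.range x)) ^ j := by
            have h3 := hMdeg α
            rwa [hdeg α (Finset.mem_filter.1 hα).1] at h3
          rw [mul_comm, pow_succ]
          exact Ideal.mul_mem_mul hMj hcm
      have hterm : ∀ α ∈ T₁, (c α * Mon x α ≠ 0) ∧ uv w (c α * Mon x α) = Vval w x α := by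
        intro α hα
        have hcond := (Finset.mem_filter.1 hα).2
        refine ⟨hcond.1, ?_⟩
        have hcne : c α ≠ 0 := left_ne_zero_of_mul hcond.1
        have hMne : Mon x α ≠ 0 := right_ne_zero_of_mul hcond.1
        rw [uv_mul w hcne hMne, huvM α hMne, huvunit (c α) hcne hcond.2, zero_add]
      by_cases hT1 : T₁.Nonempty
      · obtain ⟨hSne, α₀, hα₀T, hSval, _⟩ := sum_distinct w T₁ (fun α => c α * Mon x α)
          (Vval w x) hT1 (fun α hα => (hterm α hα).1) (fun α hα => (hterm α hα).2)
          (fun a _ b _ hq => Vinj a b hq)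
        have hα₀deg : ∑ i, α₀ i = j := hdeg α₀ (Finset.mem_filter.1 hα₀T).1
        by_cases hh'0 : h' = 0
        · refine ⟨α₀, hα₀deg.ge, ?_⟩
          rw [hsplit, hh'0, add_zero]
          exact hSval
        · by_cases hvv : uv w h' = Vval w x α₀
          · exfalso
            have hVle : Vval w x α₀ ≤ uv w h := by
              have h4 := uv_add_min w hSne hh'0 (by rw [← hsplit]; exact hne)
              rw [hSval, hvv, min_self] at h4
              rw [hsplit]
              exact h4
            obtain ⟨β, hβdeg, hβval⟩ := ihn (j+1) h' hh'mem hh'0 (by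
              rw [hvv]
              push_cast at hlt ⊢
              linarith)
            have hαβ : α₀ = β := Vinj α₀ β (by rw [← hvv, hβval])
            rw [hαβ] at hα₀deg
            omega
          · have hmin := uv_add_eq_min w hSne hh'0
              (by rw [hSval]; exact fun hq => hvv hq.symm)
            have huvh : uv w h = min (Vval w x α₀) (uv w h') := by
              rw [hsplit, hmin.2, hSval]
            rcases le_total (Vval w x α₀) (uv w h') with hle | hle
            · exact ⟨α₀, hα₀deg.ge, by rw [huvh, min_eq_left hle]⟩
            · have hhh : uv w h = uv w h' := by rw [huvh, min_eq_right hle]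
              obtain ⟨β, hβdeg, hβval⟩ := ihn (j+1) h' hh'mem hh'0 (by
                rw [← hhh]
                push_cast at hlt ⊢
                linarith)
              exact ⟨β, by omega, by rw [hhh, hβval]⟩
      · have hEq : h = h' := by
          rw [hsplit, Finset.not_nonempty_iff_eq_empty.1 hT1, Finset.sum_empty, zero_add]
        obtain ⟨β, hβdeg, hβval⟩ := ihn (j+1) h' hh'mem (by rw [← hEq]; exact hne) (by
          rw [← hEq]
          push_cast at hlt ⊢
          linarith)
        exact ⟨β, by omega, by rw [hEq, hβval]⟩
  have mono_val' : ∀ j : ℕ, ∀ h : A, h ∈ (Ideal.span (Set.range x)) ^ j → h ≠ 0 →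
      ∃ α : Fin d → ℕ, j ≤ ∑ i, α i ∧ uv w h = Vval w x α := by
    intro j h hmem hne
    obtain ⟨n, hn⟩ := exists_nat_gt (uv w h / ε)
    refine mono_val n j h hmem hne ?_
    have h1 : uv w h < (n : ℝ) * ε := by
      rw [div_lt_iff₀ hε] at hn
      linarith
    have h2 : (0:ℝ) ≤ (j:ℝ) * ε := mul_nonneg (Nat.cast_nonneg _) hε.le
    have h3 : ((j:ℝ) + (n:ℝ)) * ε = (j:ℝ) * ε + (n:ℝ) * ε := by ring
    rw [h3]
    linarith
  -- the key step: pushing one degree further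
  have STEP : ∀ N : ℕ, ∀ r : A, r ∈ (Ideal.span (Set.range x)) ^ N → (r = 0 ∨ m ≤ uv w r) →
      r ∈ I ⊔ (Ideal.span (Set.range x)) ^ (N + 1) := by
    intro N r hmem hval
    by_cases hr0 : r = 0
    · rw [hr0]; exact Submodule.zero_mem _
    have hvr : m ≤ uv w r := hval.resolve_left hr0
    obtain ⟨T, c, hdeg, heq⟩ := expand x N r hmem
    have heq' : r = ∑ α ∈ T, c α * Mon x α := heq
    set bad := T.filter (fun α => c α * Mon x α ≠ 0 ∧
      c α ∉ Ideal.span (Set.range x) ∧ Vval w x α < m) with hbad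
    set rest := ∑ α ∈ T.filter (fun α => ¬(c α * Mon x α ≠ 0 ∧
      c α ∉ Ideal.span (Set.range x) ∧ Vval w x α < m)), c α * Mon x α with hrest
    have hsplit : r = (∑ α ∈ bad, c α * Mon x α) + rest := by
      rw [hbad, hrest, Finset.sum_filter_add_sum_filter_not]
      exact heq'
    have hrestmem : rest ∈ I ⊔ (Ideal.span (Set.range x)) ^ (N + 1) := by
      rw [hrest]
      refine Submodule.sum_mem _ ?_
      intro α hα
      have hcond := (Finset.mem_filter.1 hα).2
      by_cases hz : c α * Mon x α = 0
      · rw [hz]; exact Submodule.zero_mem _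
      by_cases hcm : c α ∈ Ideal.span (Set.range x)
      · refine Submodule.mem_sup_right ?_
        have hMj : Mon x α ∈ (Ideal.span (Set.range x)) ^ N := by
          have h3 := hMdeg α
          rwa [hdeg α (Finset.mem_filter.1 hα).1] at h3
        rw [mul_comm, pow_succ]
        exact Ideal.mul_mem_mul hMj hcm
      · have hVm : m ≤ Vval w x α := by
          by_contra hlt
          push_neg at hlt
          exact hcond ⟨hz, hcm, hlt⟩
        refine Submodule.mem_sup_left ?_
        have hMI : Mon x α ∈ I := by
          rw [hI]
          exact Ideal.subset_span ⟨α, hVm, rfl⟩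
        exact Ideal.mul_mem_left _ _ hMI
    have hbadempty : bad = ∅ := by
      by_contra hne'
      have hbne : bad.Nonempty := Finset.nonempty_iff_ne_empty.2 hne'
      have hterm : ∀ α ∈ bad, (c α * Mon x α ≠ 0) ∧ uv w (c α * Mon x α) = Vval w x α := by
        intro α hα
        have hcond := (Finset.mem_filter.1 hα).2
        refine ⟨hcond.1, ?_⟩
        have hcne : c α ≠ 0 := left_ne_zero_of_mul hcond.1
        have hMne : Mon x α ≠ 0 := right_ne_zero_of_mul hcond.1
        rw [uv_mul w hcne hMne, huvM α hMne, huvunit (c α) hcne hcond.2.1, zero_add]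
      obtain ⟨hSne, α₀, hα₀T, hSval, _⟩ := sum_distinct w bad (fun α => c α * Mon x α)
        (Vval w x) hbne (fun α hα => (hterm α hα).1) (fun α hα => (hterm α hα).2)
        (fun a _ b _ hq => Vinj a b hq)
      have hα₀deg : ∑ i, α₀ i = N := hdeg α₀ (Finset.mem_filter.1 hα₀T).1
      have hα₀lt : Vval w x α₀ < m := (Finset.mem_filter.1 hα₀T).2.2.2
      obtain ⟨b', hb'I, h₂, hh₂, hbh⟩ := Submodule.mem_sup.1 hrestmem
      have hs2 : (∑ α ∈ bad, c α * Mon x α) + h₂ = r - b' := by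
        rw [hsplit, ← hbh]
        ring
      have hkey : h₂ ≠ 0 ∧ uv w h₂ = Vval w x α₀ := by
        by_cases hrb0 : r - b' = 0
        · have hh2 : h₂ = -(∑ α ∈ bad, c α * Mon x α) := by
            have h3 := hs2
            rw [hrb0] at h3
            linear_combination h3
          exact ⟨by rw [hh2]; exact neg_ne_zero.2 hSne,
            by rw [hh2, uv_neg w hSne, hSval]⟩
        · have hm' : m ≤ uv w (r - b') :=
            (psub r b' (Or.inr hvr) (hspanI b' hb'I)).resolve_left hrb0
          have hneq : uv w (r - b') ≠ uv w (-(∑ α ∈ bad, c α * Mon x α)) := by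
            rw [uv_neg w hSne, hSval]
            intro hq
            linarith
          have hmin := uv_add_eq_min w hrb0 (neg_ne_zero.2 hSne) hneq
          have hh2 : (r - b') + -(∑ α ∈ bad, c α * Mon x α) = h₂ := by
            rw [← hs2]
            ring
          constructor
          · rw [← hh2]; exact hmin.1
          · rw [← hh2, hmin.2, uv_neg w hSne, hSval, min_eq_right (by linarith)]
      obtain ⟨β, hβdeg, hβval⟩ := mono_val' (N+1) h₂ hh₂ hkey.1
      have hαβ : α₀ = β := Vinj α₀ β (by rw [← hkey.2, hβval])
      rw [hαβ] at hα₀deg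
      omega
    rw [hsplit, hbadempty, Finset.sum_empty, zero_add]
    exact hrestmem
  have MAIN : ∀ N : ℕ, ∀ a : A, (a = 0 ∨ m ≤ uv w a) →
      a ∈ I ⊔ (Ideal.span (Set.range x)) ^ N := by
    intro N
    induction N with
    | zero =>
      intro a _
      have h1 : a ∈ (Ideal.span (Set.range x) : Ideal A) ^ 0 := by
        rw [pow_zero, Ideal.one_eq_top]
        exact Submodule.mem_top
      exact Submodule.mem_sup_right h1
    | succ N ih =>
      intro a hval
      obtain ⟨b, hbI, r, hr, hba⟩ := Submodule.mem_sup.1 (ih a hval)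
      have hrval : r = a - b := by rw [← hba]; ring
      have hstep : r ∈ I ⊔ (Ideal.span (Set.range x)) ^ (N + 1) :=
        STEP N r hr (by rw [hrval]; exact psub a b hval (hspanI b hbI))
      rw [← hba]
      exact Submodule.add_mem _ (Submodule.mem_sup_left hbI) hstep
  obtain ⟨D, hD⟩ := exists_nat_gt (m / ε)
  have hmD : m < (D:ℝ) * ε := by
    rw [div_lt_iff₀ hε] at hD
    linarith
  have hpow : (Ideal.span (Set.range x)) ^ D ≤ I := by
    intro r hr
    obtain ⟨T, c, hdeg, heq⟩ := expand x D r hr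
    have heq' : r = ∑ α ∈ T, c α * Mon x α := heq
    rw [heq']
    refine Submodule.sum_mem _ ?_
    intro α hα
    by_cases hz : Mon x α = 0
    · rw [hz, mul_zero]; exact Submodule.zero_mem _
    have hVm : m ≤ Vval w x α := by
      have h1 := hVlb α hz
      rw [hdeg α hα] at h1
      linarith
    exact Ideal.mul_mem_left _ _ (by rw [hI]; exact Ideal.subset_span ⟨α, hVm, rfl⟩)
  ext a
  simp only [Set.mem_setOf_eq, SetLike.mem_coe]
  constructor
  · intro hval
    exact (sup_le le_rfl hpow : I ⊔ (Ideal.span (Set.range x)) ^ D ≤ I) (MAIN D a hval)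
  · intro hIa
    exact hspanI a hIa

end Prop25
end Paper

/-- **Final assertion of Proposition 2.5 (monomiality of valuation ideals).** Let `(A, 𝔪)` be a
Noetherian regular local ring, `v` a real-valued valuation of `Frac A` centered on `A`, and
`x₁, …, x_d` a regular system of parameters of `A` whose values are `ℤ`-linearly independent.
Then for each real `m > 0` the valuation ideal `𝔞_m` is generated by the monomials
`x₁^{a₁} ⋯ x_d^{a_d}` with `∑ aᵢ v(xᵢ) ≥ m`. -/
theorem statement6 (K A : Type*) [Field K] [CommRing A] [IsDomain A] [IsLocalRing A]
    [Algebra A K] [IsFractionRing A K]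
    [IsNoetherianRing A] (hreg : IsRegLocal A)
    (w : RealValF K)
    (hc : (∀ a : A, a ≠ 0 → 0 ≤ w.v (algebraMap A K a)) ∧
      ∀ a : A, a ∈ IsLocalRing.maximalIdeal A ↔ (a = 0 ∨ 0 < w.v (algebraMap A K a)))
    (d : ℕ) (hd : ringKrullDim A = d)
    (x : Fin d → A) (hx : Ideal.span (Set.range x) = IsLocalRing.maximalIdeal A)
    (hind : ∀ c : Fin d → ℤ, (∑ i, (c i : ℝ) * w.v (algebraMap A K (x i))) = 0 → c = 0) :
    ∀ m : ℝ, 0 < m →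
      {a : A | a = 0 ∨ m ≤ w.v (algebraMap A K a)} =
        ↑(Ideal.span {z : A | ∃ a : Fin d → ℕ,
          m ≤ (∑ i, (a i : ℝ) * w.v (algebraMap A K (x i))) ∧ z = ∏ i, x i ^ a i}) := by
  intro m hm
  exact Paper.Prop25.main_lemma w hc.1 hc.2 x hx hind m hm
end
end

section
/- Let k be a perfect field of characteristic p > 0 and let R ⊆ S be an extension of regular, integral, finitely generated k-algebras with Frac(R) = Frac(S) = K. Let 𝔞_• = {𝔞_s}_{s∈Φ} be a graded family of nonzero ideals of S indexed by an additive sub-semigroup Φ ⊆ ℝ, and let 𝔞̃_• denote the graded family {𝔞_s ∩ R}_{s∈Φ} of nonzero ideals of R. If the intersection over all m ∈ Φ of the colon ideals (𝔞_m :_S τ_m(S, 𝔞_•)) is nonzero, then the intersection over all m ∈ Φ of the colon ideals (𝔞_m ∩ R :_R τ_m(R, 𝔞̃_•)) is nonzero. (Corollary 4.13(2).) -/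
open scoped TensorProduct

noncomputable section

open Paper


namespace Cor413

section Generic

set_option linter.unusedSectionVars false

variable {A : Type*} [CommRing A] [IsDomain A] {p : ℕ}

theorem plinear_comp {e e' : ℕ} {φ ψ : A →+ A} (hφ : PLinear A p e φ)
    (hψ : PLinear A p e' ψ) : PLinear A p (e + e') (ψ.comp φ) := by
  intro r x
  have h1 : r ^ p ^ (e + e') = (r ^ p ^ e') ^ p ^ e := by
    rw [← pow_mul, ← pow_add, Nat.add_comm e' e]
  simp only [AddMonoidHom.coe_comp, Function.comp_apply]
  rw [h1, hφ (r ^ p ^ e') x, hψ r (φ x)]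

theorem plinear_comp_mulLeft {e : ℕ} {φ : A →+ A} (hφ : PLinear A p e φ) (c : A) :
    PLinear A p e (φ.comp (AddMonoidHom.mulLeft c)) := by
  intro r x
  simp only [AddMonoidHom.coe_comp, Function.comp_apply, AddMonoidHom.coe_mulLeft]
  rw [mul_left_comm c (r ^ p ^ e) x, hφ r (c * x)]

theorem ceil_add_le {t : ℝ} (ht : 0 ≤ t) (e e' : ℕ) :
    ⌈t * ((p : ℝ) ^ (e + e') - 1)⌉₊ ≤
      ⌈t * ((p : ℝ) ^ e - 1)⌉₊ + p ^ e * ⌈t * ((p : ℝ) ^ e' - 1)⌉₊ := by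
  rw [Nat.ceil_le]
  push_cast
  have h1 := Nat.le_ceil (t * ((p : ℝ) ^ e - 1))
  have h2 := Nat.le_ceil (t * ((p : ℝ) ^ e' - 1))
  have hp0 : (0:ℝ) ≤ (p:ℝ) ^ e := by positivity
  have hq : (p:ℝ) ^ (e + e') = (p:ℝ) ^ e * (p:ℝ) ^ e' := pow_add _ _ _
  nlinarith [mul_le_mul_of_nonneg_left h2 hp0]

theorem ceil_le_pred {L : ℕ} (hL : 1 ≤ L) {e : ℕ} (hp : 1 ≤ p) :
    ⌈(1 / (L:ℝ)) * ((p : ℝ) ^ e - 1)⌉₊ ≤ p ^ e - 1 := by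
  rw [Nat.ceil_le]
  have hpe : 1 ≤ p ^ e := Nat.one_le_pow _ _ (by omega)
  have hcast : ((p ^ e - 1 : ℕ) : ℝ) = (p:ℝ)^e - 1 := by
    push_cast [hpe]; ring
  rw [hcast]
  have h1 : (1:ℝ) ≤ (p:ℝ) ^ e := by exact_mod_cast hpe
  have hle : 1/(L:ℝ) ≤ 1 := by
    have : (1:ℝ) ≤ (L:ℝ) := by exact_mod_cast hL
    rw [div_le_one (by linarith)]; linarith
  exact mul_le_of_le_one_left (by linarith) hle

theorem ceil_mul_le {l M : ℕ} (hl : 0 < l) (hM : 0 < M) {e : ℕ} (hp : 1 ≤ p) :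
    M * ⌈(1 / ((l * M : ℕ) : ℝ)) * ((p : ℝ) ^ e - 1)⌉₊ ≤
      M + ⌈(1 / (l : ℝ)) * ((p : ℝ) ^ e - 1)⌉₊ := by
  have hpe : (1:ℝ) ≤ (p:ℝ) ^ e := by
    have : 1 ≤ p ^ e := Nat.one_le_pow _ _ (by omega)
    exact_mod_cast this
  set y : ℝ := (p:ℝ) ^ e - 1 with hy
  have hy0 : 0 ≤ y := by simp [hy]; linarith
  have hl0 : (0:ℝ) < (l:ℝ) := by exact_mod_cast hl
  have hM0 : (0:ℝ) < (M:ℝ) := by exact_mod_cast hM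
  have hlM : (0:ℝ) < ((l * M : ℕ) : ℝ) := by
    have : 0 < l * M := Nat.mul_pos hl hM
    exact_mod_cast this
  have h1 : (⌈(1 / ((l * M : ℕ) : ℝ)) * y⌉₊ : ℝ) < (1 / ((l * M : ℕ) : ℝ)) * y + 1 :=
    Nat.ceil_lt_add_one (by positivity)
  have h2 : (1/(l:ℝ)) * y ≤ (⌈(1/(l:ℝ)) * y⌉₊ : ℝ) := Nat.le_ceil _
  have hMl : (M:ℝ) * ((1 / ((l * M : ℕ) : ℝ)) * y) = (1/(l:ℝ)) * y := by
    push_cast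
    field_simp
  have key : (M:ℝ) * (⌈(1 / ((l * M : ℕ) : ℝ)) * y⌉₊ : ℝ) <
      (M:ℝ) + (⌈(1/(l:ℝ)) * y⌉₊ : ℝ) := by
    nlinarith
  have hfin : M * ⌈(1 / ((l * M : ℕ) : ℝ)) * y⌉₊ < M + ⌈(1/(l:ℝ)) * y⌉₊ := by
    exact_mod_cast key
  exact hfin.le

variable (p) in
/-- Generators of the ideal `τ'_c`. -/
def TCgen (𝔞 : Ideal A) (t : ℝ) (c : A) : Set A :=
  {y | ∃ e : ℕ, 0 < e ∧ ∃ φ : A →+ A, PLinear A p e φ ∧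
    ∃ u ∈ 𝔞 ^ ⌈t * ((p : ℝ) ^ e - 1)⌉₊, y = φ (c * u)}

variable (p) in
/-- The ideal `τ'_c = Σ_{e, φ} φ(c · 𝔞^{⌈t(p^e-1)⌉})`. -/
def TC (𝔞 : Ideal A) (t : ℝ) (c : A) : Ideal A := Ideal.span (TCgen p 𝔞 t c)

theorem tc_testClosed {𝔞 : Ideal A} {t : ℝ} (ht : 0 ≤ t) (c : A) :
    TestClosed A p 𝔞 t (TC p 𝔞 t c) := by
  intro e₂ he₂ ψ hψ z hz
  have key : ∀ v ∈ TC p 𝔞 t c, ∀ (e' : ℕ), 0 < e' → ∀ ψ' : A →+ A, PLinear A p e' ψ' →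
      ∀ w ∈ 𝔞 ^ ⌈t * ((p : ℝ) ^ e' - 1)⌉₊, ψ' (v * w) ∈ TC p 𝔞 t c := by
    intro v hv
    induction hv using Submodule.span_induction with
    | mem y hy =>
      obtain ⟨e₁, he₁, φ, hφ, u, hu, rfl⟩ := hy
      intro e' he' ψ' hψ' w hw
      have hrw : ψ' (φ (c * u) * w) = (ψ'.comp φ) (c * (u * w ^ p ^ e₁)) := by
        have h2 : φ (w ^ p ^ e₁ * (c * u)) = w * φ (c * u) := hφ w (c * u)
        simp only [AddMonoidHom.coe_comp, Function.comp_apply]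
        rw [show c * (u * w ^ p ^ e₁) = w ^ p ^ e₁ * (c * u) by ring, h2, mul_comm]
      rw [hrw]
      refine Ideal.subset_span ⟨e₁ + e', by omega, ψ'.comp φ, plinear_comp hφ hψ',
        u * w ^ p ^ e₁, ?_, rfl⟩
      have h3 : w ^ p ^ e₁ ∈ 𝔞 ^ (p ^ e₁ * ⌈t * ((p : ℝ) ^ e' - 1)⌉₊) := by
        rw [mul_comm, pow_mul]; exact Ideal.pow_mem_pow hw _
      have h4 : u * w ^ p ^ e₁ ∈
          𝔞 ^ (⌈t * ((p:ℝ)^e₁ - 1)⌉₊ + p ^ e₁ * ⌈t * ((p:ℝ)^e' - 1)⌉₊) := by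
        rw [pow_add]; exact Ideal.mul_mem_mul hu h3
      exact Ideal.pow_le_pow_right (ceil_add_le ht e₁ e') h4
    | zero =>
      intro e' he' ψ' hψ' w hw
      rw [zero_mul, map_zero]; exact zero_mem _
    | add v₁ v₂ h₁ h₂ ih₁ ih₂ =>
      intro e' he' ψ' hψ' w hw
      rw [add_mul, map_add]
      exact add_mem (ih₁ e' he' ψ' hψ' w hw) (ih₂ e' he' ψ' hψ' w hw)
    | smul a v hv ih =>
      intro e' he' ψ' hψ' w hw
      have h5 := ih e' he' (ψ'.comp (AddMonoidHom.mulLeft a)) (plinear_comp_mulLeft hψ' a) w hw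
      simp only [AddMonoidHom.coe_comp, Function.comp_apply, AddMonoidHom.coe_mulLeft] at h5
      have : (a • v) * w = a * (v * w) := by rw [smul_eq_mul]; ring
      rwa [this]
  exact Submodule.mul_induction_on hz (fun v hv w hw => key v hv e₂ he₂ ψ hψ w hw)
    (fun x y hx hy => by rw [map_add]; exact add_mem hx hy)

theorem testClosed_span_mul {𝔞 : Ideal A} {t : ℝ} {c : A}
    (h0 : ∀ e : ℕ, 0 < e → ∀ φ : A →+ A, PLinear A p e φ →
      ∀ u ∈ 𝔞 ^ ⌈t * ((p : ℝ) ^ e - 1)⌉₊, φ (c * u) = 0) (d : A) :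
    TestClosed A p 𝔞 t (Ideal.span {c * d}) := by
  intro e he φ hφ z hz
  refine Submodule.mul_induction_on hz (fun v hv w hw => ?_) (fun x y hx hy => by
    rw [map_add]; exact add_mem hx hy)
  obtain ⟨r, rfl⟩ := Ideal.mem_span_singleton'.mp hv
  have harg : r * (c * d) * w = (r * d) * (c * w) := by ring
  have h1 := h0 e he (φ.comp (AddMonoidHom.mulLeft (r * d))) (plinear_comp_mulLeft hφ (r * d)) w hw
  simp only [AddMonoidHom.coe_comp, Function.comp_apply, AddMonoidHom.coe_mulLeft] at h1
  rw [harg, h1]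
  exact zero_mem _

theorem exists_nonunit (h : ¬ IsField A) : ∃ d : A, d ≠ 0 ∧ ¬ IsUnit d := by
  by_contra hc
  push_neg at hc
  exact h ⟨exists_pair_ne A, mul_comm, fun {a} ha =>
    let ⟨u, hu⟩ := hc a ha; ⟨↑u⁻¹, by rw [← hu]; exact u.mul_inv⟩⟩

theorem isTestIdeal_le_tc [IsNoetherianRing A] (hnf : ¬ IsField A) {𝔞 T : Ideal A} {t : ℝ}
    (ht : 0 ≤ t) (hT : IsTestIdeal A p 𝔞 t T) {c : A} (hc : c ∈ T) (hc0 : c ≠ 0) :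
    T ≤ TC p 𝔞 t c := by
  refine hT.2.2 _ ?_ (tc_testClosed ht c)
  intro hbot
  have h0 : ∀ e : ℕ, 0 < e → ∀ φ : A →+ A, PLinear A p e φ →
      ∀ u ∈ 𝔞 ^ ⌈t * ((p : ℝ) ^ e - 1)⌉₊, φ (c * u) = 0 := by
    intro e he φ hφ u hu
    have hmem : φ (c * u) ∈ TC p 𝔞 t c := Ideal.subset_span ⟨e, he, φ, hφ, u, hu, rfl⟩
    rwa [hbot, Ideal.mem_bot] at hmem
  obtain ⟨d, hd0, hdu⟩ := exists_nonunit hnf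
  have hTle : ∀ n : ℕ, T ≤ Ideal.span {d} ^ n := by
    intro n
    have h1 : T ≤ Ideal.span {c * d ^ n} :=
      hT.2.2 _ (by simpa [Ideal.span_singleton_eq_bot] using
        mul_ne_zero hc0 (pow_ne_zero n hd0)) (testClosed_span_mul h0 (d ^ n))
    refine h1.trans ?_
    rw [Ideal.span_singleton_pow]
    exact Ideal.span_singleton_le_span_singleton.mpr (dvd_mul_left _ _)
  have hKrull : (⨅ n : ℕ, Ideal.span {d} ^ n) = ⊥ :=
    Ideal.iInf_pow_eq_bot_of_isDomain _ (by simpa [Ideal.span_singleton_eq_top] using hdu)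
  exact hT.1 (le_bot_iff.mp (hKrull ▸ le_iInf hTle))

/-- The colon ideal `(J : w)`. -/
def colonW (J : Ideal A) (w : A) : Ideal A where
  carrier := {z | w * z ∈ J}
  add_mem' := fun {a b} ha hb => by
    simp only [Set.mem_setOf_eq, mul_add] at *
    exact Ideal.add_mem J ha hb
  zero_mem' := by simp
  smul_mem' := fun r z hz => by
    simp only [Set.mem_setOf_eq, smul_eq_mul] at *
    rw [mul_left_comm]
    exact Ideal.mul_mem_left J r hz

theorem mem_colonW {J : Ideal A} {w z : A} : z ∈ colonW J w ↔ w * z ∈ J := Iff.rfl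

theorem le_colonW {J : Ideal A} {w : A} : J ≤ colonW J w :=
  fun z hz => Ideal.mul_mem_left J w hz

theorem colonW_testClosed {𝔟 J : Ideal A} {L : ℕ} (hL : 1 ≤ L) (hp : 1 ≤ p)
    (hJ : TestClosed A p 𝔟 (1 / (L : ℝ)) J) {w : A} (hw : w ∈ 𝔟) (𝔞' : Ideal A) (t' : ℝ) :
    TestClosed A p 𝔞' t' (colonW J w) := by
  intro e he φ hφ z hz
  have hz' : w * z ∈ J := mem_colonW.mp (Ideal.mul_le_left hz)
  rw [mem_colonW]
  have hq1 : 1 ≤ p ^ e := Nat.one_le_pow _ _ (by omega)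
  have h1 : w * φ z = φ (w ^ p ^ e * z) := (hφ w z).symm
  have h2 : w ^ p ^ e * z = (w * z) * w ^ (p ^ e - 1) := by
    conv_lhs => rw [show p ^ e = (p ^ e - 1) + 1 from (Nat.sub_add_cancel hq1).symm]
    rw [pow_succ]
    ring
  have h3 : (w * z) * w ^ (p ^ e - 1) ∈
      J * 𝔟 ^ ⌈(1/(L:ℝ)) * ((p:ℝ)^e - 1)⌉₊ :=
    Ideal.mul_mem_mul hz' (Ideal.pow_le_pow_right (ceil_le_pred hL hp) (Ideal.pow_mem_pow hw _))
  rw [h1, h2]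
  exact hJ e he φ hφ _ h3

variable (p) in
/-- Candidate test ideal: the intersection of all nonzero `TestClosed` ideals. -/
def tauStar (𝔟 : Ideal A) (t : ℝ) : Ideal A :=
  sInf {J : Ideal A | J ≠ ⊥ ∧ TestClosed A p 𝔟 t J}

theorem tauStar_le {𝔟 J : Ideal A} {t : ℝ} (h1 : J ≠ ⊥) (h2 : TestClosed A p 𝔟 t J) :
    tauStar p 𝔟 t ≤ J := sInf_le ⟨h1, h2⟩

theorem mem_tauStar {𝔟 : Ideal A} {t : ℝ} {x : A}
    (h : ∀ J : Ideal A, J ≠ ⊥ → TestClosed A p 𝔟 t J → x ∈ J) : x ∈ tauStar p 𝔟 t :=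
  Submodule.mem_sInf.mpr fun J hJ => h J hJ.1 hJ.2

theorem tauStar_testClosed (𝔟 : Ideal A) (t : ℝ) : TestClosed A p 𝔟 t (tauStar p 𝔟 t) := by
  intro e he φ hφ z hz
  refine Submodule.mem_sInf.mpr fun J hJ => ?_
  exact hJ.2 e he φ hφ z (Ideal.mul_mono (sInf_le hJ) le_rfl hz)

theorem isTestIdeal_tauStar {𝔟 : Ideal A} {t : ℝ} (h : tauStar p 𝔟 t ≠ ⊥) :
    IsTestIdeal A p 𝔟 t (tauStar p 𝔟 t) :=
  ⟨h, tauStar_testClosed _ _, fun J h1 h2 => tauStar_le h1 h2⟩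

theorem isTestIdeal_le_of_pow_le [IsNoetherianRing A] (hnf : ¬ IsField A)
    {𝔞₁ 𝔞₂ J' τ : Ideal A} {l M L : ℕ} (hl : 0 < l) (hM : 0 < M) (hL : L = l * M)
    (hp : 1 ≤ p)
    (hJ' : IsTestIdeal A p 𝔞₁ (1 / (l : ℝ)) J')
    (hτ : TestClosed A p 𝔞₂ (1 / (L : ℝ)) τ) (hτne : τ ≠ ⊥)
    (hpow : 𝔞₁ ^ M ≤ 𝔞₂) (h𝔞₁ : 𝔞₁ ≠ ⊥) : J' ≤ τ := by
  obtain ⟨t', ht'J, ht'0⟩ := Submodule.exists_mem_ne_zero_of_ne_bot hJ'.1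
  obtain ⟨ts, htsτ, hts0⟩ := Submodule.exists_mem_ne_zero_of_ne_bot hτne
  obtain ⟨v0, hv0, hv00⟩ := Submodule.exists_mem_ne_zero_of_ne_bot h𝔞₁
  have hcJ : t' * (ts * v0 ^ M) ∈ J' := Ideal.mul_mem_right _ _ ht'J
  have hc0 : t' * (ts * v0 ^ M) ≠ 0 :=
    mul_ne_zero ht'0 (mul_ne_zero hts0 (pow_ne_zero _ hv00))
  refine (isTestIdeal_le_tc hnf (by positivity) hJ' hcJ hc0).trans ?_
  rw [TC, Ideal.span_le]
  rintro y ⟨e, he, φ, hφ, u, hu, rfl⟩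
  have hVU : v0 ^ M * u ∈ 𝔞₂ ^ ⌈(1/(L:ℝ)) * ((p:ℝ)^e - 1)⌉₊ := by
    have h1 : v0 ^ M * u ∈ 𝔞₁ ^ (M + ⌈(1/(l:ℝ)) * ((p:ℝ)^e - 1)⌉₊) := by
      rw [pow_add]; exact Ideal.mul_mem_mul (Ideal.pow_mem_pow hv0 M) hu
    have h2 : 𝔞₁ ^ (M + ⌈(1/(l:ℝ)) * ((p:ℝ)^e - 1)⌉₊) ≤
        𝔞₁ ^ (M * ⌈(1/(L:ℝ)) * ((p:ℝ)^e - 1)⌉₊) := by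
      refine Ideal.pow_le_pow_right ?_
      subst hL
      exact ceil_mul_le hl hM hp
    have h3 : 𝔞₁ ^ (M * ⌈(1/(L:ℝ)) * ((p:ℝ)^e - 1)⌉₊) =
        (𝔞₁ ^ M) ^ ⌈(1/(L:ℝ)) * ((p:ℝ)^e - 1)⌉₊ := pow_mul _ _ _
    have h4 : (𝔞₁ ^ M) ^ ⌈(1/(L:ℝ)) * ((p:ℝ)^e - 1)⌉₊ ≤
        𝔞₂ ^ ⌈(1/(L:ℝ)) * ((p:ℝ)^e - 1)⌉₊ := Ideal.pow_right_mono hpow _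
    exact h4 (h3 ▸ h2 h1)
  have hres := hτ e he (φ.comp (AddMonoidHom.mulLeft t')) (plinear_comp_mulLeft hφ t') _
    (Ideal.mul_mem_mul htsτ hVU)
  simp only [AddMonoidHom.coe_comp, Function.comp_apply, AddMonoidHom.coe_mulLeft] at hres
  rwa [show t' * (ts * v0 ^ M) * u = t' * (ts * (v0 ^ M * u)) by ring]

theorem pow_comap_le {R' S' : Type*} [CommRing R'] [CommRing S'] (f : R' →+* S')
    (I : Ideal S') (n : ℕ) : (I.comap f) ^ n ≤ (I ^ n).comap f := by
  induction n with
  | zero => simp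
  | succ n ih =>
    rw [pow_succ, pow_succ]
    refine Ideal.mul_le.mpr fun a ha b hb => ?_
    simp only [Ideal.mem_comap, map_mul]
    exact Ideal.mul_mem_mul (ih ha) hb


end Generic

section Extension

set_option linter.unusedSectionVars false
set_option maxHeartbeats 1000000

variable {p : ℕ} [Fact p.Prime]
variable {k K R S : Type*} [Field k] [PerfectField k] [CharP k p] [Field K] [Algebra k K]
variable [CommRing R] [IsDomain R] [Algebra k R] [CommRing S] [IsDomain S] [Algebra k S]
variable [Algebra R S] [IsScalarTower k R S]
variable [Algebra R K] [Algebra S K] [IsScalarTower R S K] [IsScalarTower k S K]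
variable [IsFractionRing R K] [IsFractionRing S K]

include K in
theorem comap_ne_bot_of_ne_bot {J : Ideal S} (hJ : J ≠ ⊥) :
    J.comap (algebraMap R S) ≠ ⊥ := by
  obtain ⟨s, hsJ, hs0⟩ := Submodule.exists_mem_ne_zero_of_ne_bot hJ
  obtain ⟨a, b, hbm, hab⟩ := IsFractionRing.div_surjective (A := R) (algebraMap S K s)
  have hb0 : b ≠ 0 := nonZeroDivisors.ne_zero hbm
  have hbK : algebraMap R K b ≠ 0 := by
    rw [Ne, IsFractionRing.to_map_eq_zero_iff]; exact hb0
  have hsK : algebraMap S K s ≠ 0 := by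
    rw [Ne, map_eq_zero_iff _ (IsFractionRing.injective S K)]; exact hs0
  have haK : algebraMap R K a = algebraMap S K s * algebraMap R K b :=
    (div_eq_iff hbK).mp hab
  have ha0 : a ≠ 0 := by
    intro h
    rw [h, map_zero] at haK
    exact hsK (by
      have := mul_eq_zero.mp haK.symm
      tauto)
  intro hbot
  have hmem : a ∈ J.comap (algebraMap R S) := by
    rw [Ideal.mem_comap]
    have : algebraMap R S a = s * algebraMap R S b := by
      apply IsFractionRing.injective S K
      rw [map_mul, ← IsScalarTower.algebraMap_apply R S K,
        ← IsScalarTower.algebraMap_apply R S K, haK]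
    rw [this]
    exact Ideal.mul_mem_right _ _ hsJ
  rw [hbot, Ideal.mem_bot] at hmem
  exact ha0 hmem

include K in
theorem not_isField_R (hnf : ¬ IsField S) : ¬ IsField R := by
  intro hR
  apply hnf
  refine ⟨exists_pair_ne S, mul_comm, ?_⟩
  intro s hs0
  obtain ⟨a, b, hbm, hab⟩ := IsFractionRing.div_surjective (A := R) (algebraMap S K s)
  have hb0 : b ≠ 0 := nonZeroDivisors.ne_zero hbm
  have hbK : algebraMap R K b ≠ 0 := by
    rw [Ne, IsFractionRing.to_map_eq_zero_iff]; exact hb0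
  have hsK : algebraMap S K s ≠ 0 := by
    rw [Ne, map_eq_zero_iff _ (IsFractionRing.injective S K)]; exact hs0
  have haK : algebraMap R K a = algebraMap S K s * algebraMap R K b :=
    (div_eq_iff hbK).mp hab
  have ha0 : a ≠ 0 := by
    intro h
    rw [h, map_zero] at haK
    exact hsK (by
      have := mul_eq_zero.mp haK.symm
      tauto)
  obtain ⟨c, hc⟩ := hR.mul_inv_cancel ha0
  refine ⟨algebraMap R S (b * c), ?_⟩
  apply IsFractionRing.injective S K
  rw [map_mul, map_one, ← IsScalarTower.algebraMap_apply R S K, map_mul]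
  calc algebraMap S K s * (algebraMap R K b * algebraMap R K c)
      = algebraMap R K a * algebraMap R K c := by rw [haK]; ring
    _ = 1 := by rw [← map_mul, hc, map_one]

include K in
theorem exists_plinear_ext (hSfg : Algebra.FiniteType k S) :
    ∃ (f : R) (B : ℕ), f ≠ 0 ∧ ∀ e : ℕ, 0 < e → ∀ φ : R →+ R, PLinear R p e φ →
      ∃ ψ : S →+ S, PLinear S p e ψ ∧
        ∀ z : R, ψ (algebraMap R S z) = algebraMap R S (f ^ B * φ z) := by
  classical
  obtain ⟨gs, hgs⟩ := hSfg.out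
  have hKinj := IsFractionRing.injective R K
  have hSinj := IsFractionRing.injective S K
  have hKne : ∀ {d : R}, d ≠ 0 → algebraMap R K d ≠ 0 := fun {d} hd => by
    rw [Ne, IsFractionRing.to_map_eq_zero_iff]; exact hd
  have htow : ∀ r : R, algebraMap R K r = algebraMap S K (algebraMap R S r) :=
    fun r => IsScalarTower.algebraMap_apply R S K r
  -- common denominator for the generators
  have hden : ∀ s : S, ∃ dz : R × R, dz.1 ≠ 0 ∧
      algebraMap R S dz.1 * s = algebraMap R S dz.2 := by
    intro s
    obtain ⟨z0, d0, hd0m, hfrac⟩ := IsFractionRing.div_surjective (A := R) (algebraMap S K s)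
    have hd0 : d0 ≠ 0 := nonZeroDivisors.ne_zero hd0m
    have hd0K : algebraMap R K d0 ≠ 0 := hKne hd0
    refine ⟨(d0, z0), hd0, ?_⟩
    apply hSinj
    rw [map_mul, ← htow, ← htow]
    rw [(div_eq_iff hd0K).mp hfrac]
    ring
  choose dz hdz0 hdzeq using hden
  set f : R := ∏ g ∈ gs, (dz g).1 with hfdef
  have hf0 : f ≠ 0 := Finset.prod_ne_zero_iff.mpr fun g _ => hdz0 g
  have hfK : algebraMap R K f ≠ 0 := hKne hf0
  have hfg : ∀ g ∈ gs, ∃ c : R, algebraMap R S f * g = algebraMap R S c := by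
    intro g hg
    refine ⟨(∏ x ∈ gs.erase g, (dz x).1) * (dz g).2, ?_⟩
    have h1 : f = (dz g).1 * ∏ x ∈ gs.erase g, (dz x).1 := (Finset.mul_prod_erase gs _ hg).symm
    have h2 : algebraMap R S f * g
        = algebraMap R S (∏ x ∈ gs.erase g, (dz x).1) * (algebraMap R S (dz g).1 * g) := by
      rw [h1, map_mul]; ring
    rw [h2, hdzeq g, ← map_mul]
  choose! cfun hcfun using hfg
  set B : ℕ := gs.card + 1 with hBdef
  refine ⟨f, B, hf0, ?_⟩
  intro e he φ hφ
  set q : ℕ := p ^ e with hqdef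
  have hq1 : 1 < q := Nat.one_lt_pow (by omega) (Nat.Prime.one_lt Fact.out)
  -- representations of elements of K with q-th power denominators
  have hrep : ∀ ξ : K, ∃ zd : R × R, zd.2 ≠ 0 ∧
      ξ * (algebraMap R K zd.2) ^ q = algebraMap R K zd.1 := by
    intro ξ
    obtain ⟨z0, d0, hd0m, hfrac⟩ := IsFractionRing.div_surjective (A := R) ξ
    have hd0 : d0 ≠ 0 := nonZeroDivisors.ne_zero hd0m
    have hd0K : algebraMap R K d0 ≠ 0 := hKne hd0
    refine ⟨(z0 * d0 ^ (q - 1), d0), hd0, ?_⟩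
    have hpow : (algebraMap R K d0) ^ q
        = (algebraMap R K d0) ^ (q - 1) * algebraMap R K d0 := by
      rw [← pow_succ, Nat.sub_add_cancel (by omega)]
    rw [← hfrac, map_mul, map_pow, hpow]
    field_simp
    try ring
  let rep : K → R × R := fun ξ => (hrep ξ).choose
  have hrep1 : ∀ ξ : K, (rep ξ).2 ≠ 0 := fun ξ => (hrep ξ).choose_spec.1
  have hrep2 : ∀ ξ : K, ξ * (algebraMap R K (rep ξ).2) ^ q = algebraMap R K (rep ξ).1 :=
    fun ξ => (hrep ξ).choose_spec.2
  let vφ : K → K := fun ξ => algebraMap R K (φ (rep ξ).1) / algebraMap R K (rep ξ).2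
  have hvspec : ∀ (ξ : K) (z d : R), d ≠ 0 →
      ξ * (algebraMap R K d) ^ q = algebraMap R K z →
      vφ ξ = algebraMap R K (φ z) / algebraMap R K d := by
    intro ξ z d hd hzd
    have h1 : z * (rep ξ).2 ^ q = (rep ξ).1 * d ^ q := by
      apply hKinj
      rw [map_mul, map_mul, map_pow, map_pow, ← hrep2 ξ, ← hzd]
      ring
    have h2 : (rep ξ).2 * φ z = d * φ ((rep ξ).1) := by
      have l1 : φ ((rep ξ).2 ^ q * z) = (rep ξ).2 * φ z := hφ _ z
      have l2 : φ (d ^ q * (rep ξ).1) = d * φ ((rep ξ).1) := hφ _ _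
      rw [← l1, ← l2]
      congr 1
      rw [mul_comm ((rep ξ).2 ^ q) z, h1, mul_comm]
    show algebraMap R K (φ (rep ξ).1) / algebraMap R K (rep ξ).2 = _
    rw [div_eq_div_iff (hKne (hrep1 ξ)) (hKne hd), ← map_mul, ← map_mul]
    congr 1
    linear_combination -h2
  have hvR : ∀ w : R, vφ (algebraMap R K w) = algebraMap R K (φ w) := by
    intro w
    have h := hvspec (algebraMap R K w) w 1 one_ne_zero (by simp)
    simpa using h
  have hv0 : vφ 0 = 0 := by
    have h := hvspec 0 0 1 one_ne_zero (by simp)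
    simpa using h
  have hvadd : ∀ ξ η : K, vφ (ξ + η) = vφ ξ + vφ η := by
    intro ξ η
    have hd := hrep1 ξ; have hd' := hrep1 η
    have hspec : vφ (ξ + η) = algebraMap R K (φ ((rep ξ).1 * (rep η).2 ^ q
        + (rep η).1 * (rep ξ).2 ^ q)) / algebraMap R K ((rep ξ).2 * (rep η).2) := by
      apply hvspec _ _ _ (mul_ne_zero hd hd')
      simp only [map_add, map_mul, map_pow]
      linear_combination (algebraMap R K (rep η).2) ^ q * hrep2 ξ
        + (algebraMap R K (rep ξ).2) ^ q * hrep2 η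
    have hphi : φ ((rep ξ).1 * (rep η).2 ^ q + (rep η).1 * (rep ξ).2 ^ q)
        = (rep η).2 * φ (rep ξ).1 + (rep ξ).2 * φ (rep η).1 := by
      rw [map_add]
      rw [show (rep ξ).1 * (rep η).2 ^ q = (rep η).2 ^ q * (rep ξ).1 by ring, hφ]
      rw [show (rep η).1 * (rep ξ).2 ^ q = (rep ξ).2 ^ q * (rep η).1 by ring, hφ]
    rw [hspec, hphi]
    show _ = algebraMap R K (φ (rep ξ).1) / algebraMap R K (rep ξ).2
      + algebraMap R K (φ (rep η).1) / algebraMap R K (rep η).2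
    rw [map_add, map_mul, map_mul, map_mul]
    field_simp [hKne hd, hKne hd']
  have hvq : ∀ (s ξ : K), vφ (s ^ q * ξ) = s * vφ ξ := by
    intro s ξ
    obtain ⟨a, b, hbm, hab⟩ := IsFractionRing.div_surjective (A := R) s
    have hb : b ≠ 0 := nonZeroDivisors.ne_zero hbm
    have hbK : algebraMap R K b ≠ 0 := hKne hb
    have hd := hrep1 ξ
    have hdK : algebraMap R K (rep ξ).2 ≠ 0 := hKne hd
    have hspec : vφ (s ^ q * ξ)
        = algebraMap R K (φ (a ^ q * (rep ξ).1)) / algebraMap R K (b * (rep ξ).2) := by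
      apply hvspec _ _ _ (mul_ne_zero hb hd)
      simp only [map_mul, map_pow]
      rw [← hab, ← hrep2 ξ]
      rw [div_pow, mul_pow, div_mul_eq_mul_div, div_mul_eq_mul_div, div_eq_iff (pow_ne_zero _ hbK)]
      ring
    rw [hspec, hφ a, ← hab, map_mul, map_mul]
    show _ = algebraMap R K a / algebraMap R K b
      * (algebraMap R K (φ (rep ξ).1) / algebraMap R K (rep ξ).2)
    field_simp
    try ring
  -- q-th roots in the perfect field k
  have hroot : ∀ c : k, ∃ d : k, d ^ q = c := by
    intro c
    obtain ⟨d, hd⟩ := (bijective_iterateFrobenius k p e).2 c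
    exact ⟨d, by rw [hqdef]; rwa [iterateFrobenius_def] at hd⟩
  -- the decomposition generators
  set Gq : Set S := {y | ∃ (tt : S) (α : S → ℕ),
      (∀ g ∈ gs, α g < q) ∧ y = tt ^ q * ∏ g ∈ gs, g ^ α g} with hGdef
  have hGmul : ∀ y₁ ∈ Gq, ∀ y₂ ∈ Gq, y₁ * y₂ ∈ Gq := by
    rintro y₁ ⟨t₁, α₁, hα₁, rfl⟩ y₂ ⟨t₂, α₂, hα₂, rfl⟩
    refine ⟨t₁ * t₂ * ∏ g ∈ gs, g ^ ((α₁ g + α₂ g) / q), fun g => (α₁ g + α₂ g) % q,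
      fun g hg => Nat.mod_lt _ (by omega), ?_⟩
    have key : ((∏ g ∈ gs, g ^ ((α₁ g + α₂ g) / q)) ^ q)
        * ∏ g ∈ gs, g ^ ((α₁ g + α₂ g) % q)
        = (∏ g ∈ gs, g ^ α₁ g) * ∏ g ∈ gs, g ^ α₂ g := by
      rw [← Finset.prod_pow, ← Finset.prod_mul_distrib, ← Finset.prod_mul_distrib]
      refine Finset.prod_congr rfl fun g _ => ?_
      rw [← pow_mul, ← pow_add, ← pow_add]
      congr 1
      rw [mul_comm]
      exact Nat.div_add_mod _ q
    calc (t₁ ^ q * ∏ g ∈ gs, g ^ α₁ g) * (t₂ ^ q * ∏ g ∈ gs, g ^ α₂ g)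
        = (t₁ ^ q * t₂ ^ q) * ((∏ g ∈ gs, g ^ α₁ g) * ∏ g ∈ gs, g ^ α₂ g) := by ring
      _ = (t₁ ^ q * t₂ ^ q) * (((∏ g ∈ gs, g ^ ((α₁ g + α₂ g) / q)) ^ q)
            * ∏ g ∈ gs, g ^ ((α₁ g + α₂ g) % q)) := by rw [key]
      _ = (t₁ * t₂ * ∏ g ∈ gs, g ^ ((α₁ g + α₂ g) / q)) ^ q
            * ∏ g ∈ gs, g ^ ((α₁ g + α₂ g) % q) := by
          rw [mul_pow, mul_pow]; ring
  have hmulclosed : ∀ y₁ ∈ AddSubmonoid.closure Gq, ∀ y₂ ∈ AddSubmonoid.closure Gq,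
      y₁ * y₂ ∈ AddSubmonoid.closure Gq := by
    intro y₁ h₁
    induction h₁ using AddSubmonoid.closure_induction with
    | mem y hy =>
      intro y₂ h₂
      induction h₂ using AddSubmonoid.closure_induction with
      | mem y' hy' => exact AddSubmonoid.subset_closure (hGmul _ hy _ hy')
      | zero => rw [mul_zero]; exact zero_mem _
      | add y₂ y₃ hy₂ hy₃ ih₂ ih₃ => rw [mul_add]; exact add_mem ih₂ ih₃
    | zero => intro y₂ h₂; rw [zero_mul]; exact zero_mem _
    | add ya yb hya hyb iha ihb =>
      intro y₂ h₂
      rw [add_mul]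
      exact add_mem (iha y₂ h₂) (ihb y₂ h₂)
  let Tq : Subalgebra k S :=
    { carrier := AddSubmonoid.closure Gq
      mul_mem' := fun {a b} ha hb => hmulclosed a ha b hb
      add_mem' := fun {a b} ha hb => add_mem ha hb
      one_mem' := AddSubmonoid.subset_closure ⟨1, fun _ => 0,
        fun g _ => by simpa using (by omega : 0 < q), by simp⟩
      zero_mem' := zero_mem _
      algebraMap_mem' := fun c => by
        obtain ⟨d, hd⟩ := hroot c
        refine AddSubmonoid.subset_closure ⟨algebraMap k S d, fun _ => 0,
          fun g _ => by simpa using (by omega : 0 < q), ?_⟩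
        rw [← map_pow, hd]
        simp }
  have hTop : ∀ s : S, s ∈ AddSubmonoid.closure Gq := by
    have hgen : (↑gs : Set S) ⊆ Tq := by
      intro g hg
      have hg' : g ∈ gs := hg
      refine AddSubmonoid.subset_closure ⟨1, fun x => if x = g then 1 else 0, ?_, ?_⟩
      · intro x _; dsimp only; split <;> omega
      · rw [one_pow, one_mul,
          Finset.prod_eq_single g (fun b _ hb => by simp [hb]) (fun h => absurd hg' h)]
        simp
    have hle : Algebra.adjoin k (↑gs : Set S) ≤ Tq := Algebra.adjoin_le hgen
    intro s
    have hmem : s ∈ (⊤ : Subalgebra k S) := trivial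
    rw [← hgs] at hmem
    exact hle hmem
  -- the main membership claim
  have hmem : ∀ s : S, ∃ w : S,
      algebraMap S K w = (algebraMap R K f) ^ B * vφ (algebraMap S K s) := by
    intro s
    have hs := hTop s
    induction hs using AddSubmonoid.closure_induction with
    | mem y hy =>
      obtain ⟨tt, α, hα, rfl⟩ := hy
      have hcmem : ∀ g ∈ gs,
          (algebraMap R S f) ^ α g * g ^ α g = algebraMap R S ((cfun g) ^ α g) := by
        intro g hg
        rw [map_pow, ← mul_pow, hcfun g hg]
      have hmu : (algebraMap R S f) ^ (∑ g ∈ gs, α g) * ∏ g ∈ gs, g ^ α g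
          = algebraMap R S (∏ g ∈ gs, (cfun g) ^ α g) := by
        have hcongr := Finset.prod_congr rfl hcmem
        rw [Finset.prod_mul_distrib, Finset.prod_pow_eq_pow_sum] at hcongr
        rw [hcongr, ← map_prod]
      have hAle : (∑ g ∈ gs, α g) ≤ B * q := by
        have h6 : (∑ g ∈ gs, α g) ≤ gs.card * (q - 1) := by
          calc ∑ g ∈ gs, α g ≤ ∑ _g ∈ gs, (q - 1) :=
                Finset.sum_le_sum fun g hg => by have := hα g hg; omega
            _ = gs.card * (q - 1) := by rw [Finset.sum_const, smul_eq_mul]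
        have h7 : gs.card * (q - 1) ≤ B * q := by
          calc gs.card * (q - 1) ≤ gs.card * q := Nat.mul_le_mul_left _ (by omega)
            _ ≤ B * q := Nat.mul_le_mul_right _ (by omega)
        omega
      have h5 : algebraMap S K (∏ g ∈ gs, g ^ α g) * (algebraMap R K f) ^ (∑ g ∈ gs, α g)
          = algebraMap R K (∏ g ∈ gs, (cfun g) ^ α g) := by
        rw [htow, htow, ← map_pow, ← map_mul, mul_comm, hmu]
      have hrepμ : (algebraMap S K (∏ g ∈ gs, g ^ α g)) * (algebraMap R K (f ^ B)) ^ q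
          = algebraMap R K (f ^ (B * q - ∑ g ∈ gs, α g) * ∏ g ∈ gs, (cfun g) ^ α g) := by
        set A : ℕ := ∑ g ∈ gs, α g with hAdef
        set C : ℕ := B * q - A with hCdef
        have hBq : B * q = C + A := (Nat.sub_add_cancel hAle).symm
        rw [map_pow, ← pow_mul, map_mul, map_pow, hBq, pow_add, ← h5]
        ring
      have hμv := hvspec _ _ _ (pow_ne_zero B hf0) hrepμ
      refine ⟨tt * algebraMap R S (φ (f ^ (B * q - ∑ g ∈ gs, α g)
        * ∏ g ∈ gs, (cfun g) ^ α g)), ?_⟩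
      have hyK : algebraMap S K (tt ^ q * ∏ g ∈ gs, g ^ α g)
          = (algebraMap S K tt) ^ q * algebraMap S K (∏ g ∈ gs, g ^ α g) := by
        rw [map_mul, map_pow]
      rw [hyK, hvq, hμv, map_mul, ← htow, map_pow]
      have hfB : (algebraMap R K f) ^ B ≠ 0 := pow_ne_zero _ hfK
      field_simp
      try ring
    | zero => exact ⟨0, by simp [hv0]⟩
    | add y₁ y₂ hy₁ hy₂ ih₁ ih₂ =>
      obtain ⟨w₁, hw₁⟩ := ih₁
      obtain ⟨w₂, hw₂⟩ := ih₂
      exact ⟨w₁ + w₂, by rw [map_add, map_add, hvadd, mul_add, hw₁, hw₂]⟩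
  choose Fψ hFψ using hmem
  have hFadd : ∀ a b : S, Fψ (a + b) = Fψ a + Fψ b := by
    intro a b
    apply hSinj
    rw [map_add, hFψ, hFψ, hFψ, map_add, hvadd, mul_add]
  refine ⟨AddMonoidHom.mk' Fψ hFadd, ?_, ?_⟩
  · intro r x
    apply hSinj
    show algebraMap S K (Fψ (r ^ p ^ e * x)) = algebraMap S K (r * Fψ x)
    rw [hFψ, map_mul, map_mul, hFψ, map_pow, ← hqdef, hvq]
    ring
  · intro z
    apply hSinj
    show algebraMap S K (Fψ (algebraMap R S z))
      = algebraMap S K (algebraMap R S (f ^ B * φ z))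
    rw [hFψ, ← htow, hvR, ← htow, map_mul, map_pow]

end Extension


end Cor413

/-- **Corollary 4.13(2).** Let `k` be a perfect field of characteristic `p > 0` and `R ⊆ S` an
extension of regular, integral, finitely generated `k`-algebras with the same fraction field
`K`.  Let `𝔞_•` be a graded family of nonzero ideals of `S` and `𝔞̃_•` its family of
contractions to `R`.  If `⋂_{m ∈ Φ} (𝔞_m :_S τ_m(S, 𝔞_•)) ≠ (0)`, then
`⋂_{m ∈ Φ} (𝔞_m ∩ R :_R τ_m(R, 𝔞̃_•)) ≠ (0)`. -/
theorem statement16 (p : ℕ) [Fact p.Prime]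
    (k K R S : Type*) [Field k] [PerfectField k] [CharP k p] [Field K] [Algebra k K]
    [CommRing R] [IsDomain R] [Algebra k R] [CommRing S] [IsDomain S] [Algebra k S]
    [Algebra R S] [IsScalarTower k R S]
    [Algebra R K] [Algebra S K] [IsScalarTower R S K] [IsScalarTower k S K]
    [IsFractionRing R K] [IsFractionRing S K]
    (hRfg : Algebra.FiniteType k R) (hSfg : Algebra.FiniteType k S)
    (hRreg : IsRegRing R) (hSreg : IsRegRing S)
    (hinj : Function.Injective (algebraMap R S))
    (Φ : Set ℝ) (hΦ : ∀ s ∈ Φ, ∀ t ∈ Φ, s + t ∈ Φ)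
    (a : ℝ → Ideal S) (hgr : ∀ s ∈ Φ, ∀ t ∈ Φ, a s * a t ≤ a (s + t))
    (hne : ∀ s ∈ Φ, a s ≠ ⊥)
    (h : ∃ x : S, x ≠ 0 ∧ ∀ m ∈ Φ, ∀ T : Ideal S,
      IsAsympTestIdeal S p Φ a m T → ∀ y ∈ T, x * y ∈ a m) :
    ∃ r : R, r ≠ 0 ∧ ∀ m ∈ Φ, ∀ T : Ideal R,
      IsAsympTestIdeal R p Φ (fun s => (a s).comap (algebraMap R S)) m T →
      ∀ y ∈ T, r * y ∈ (a m).comap (algebraMap R S) := by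
  classical
  obtain ⟨x, hx0, hx⟩ := h
  by_cases hSf : IsField S
  · -- degenerate case: `S` is a field, so every `a m` is the unit ideal
    refine ⟨1, one_ne_zero, ?_⟩
    intro m hm T hT y hy
    rw [Ideal.mem_comap]
    obtain ⟨z, hz, hz0⟩ := Submodule.exists_mem_ne_zero_of_ne_bot (hne m hm)
    obtain ⟨w, hw⟩ := hSf.mul_inv_cancel hz0
    have h1 : (1 : S) ∈ a m := by rw [← hw]; exact Ideal.mul_mem_right _ _ hz
    have h2 : a m = ⊤ := (Ideal.eq_top_iff_one _).mpr h1
    rw [h2]; trivial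
  · have hnfS : ¬ IsField S := hSf
    have hnfR : ¬ IsField R := Cor413.not_isField_R (K := K) hnfS
    haveI hNR : IsNoetherianRing R := hRreg.1
    haveI hNS : IsNoetherianRing S := hSreg.1
    have hp1 : 1 ≤ p := (Fact.out : p.Prime).one_lt.le
    obtain ⟨f, B, hf0, hext⟩ :=
      Cor413.exists_plinear_ext (p := p) (k := k) (K := K) (R := R) (S := S) hSfg
    -- numerator and denominator of `x`
    obtain ⟨r₁, r₂, hr₂m, hr⟩ := IsFractionRing.div_surjective (A := R) (algebraMap S K x)
    have hr₂0 : r₂ ≠ 0 := nonZeroDivisors.ne_zero hr₂m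
    have hr₂K : algebraMap R K r₂ ≠ 0 := by
      rw [Ne, IsFractionRing.to_map_eq_zero_iff]; exact hr₂0
    have hxK : algebraMap S K x ≠ 0 := by
      rw [Ne, map_eq_zero_iff _ (IsFractionRing.injective S K)]; exact hx0
    have hr1K : algebraMap R K r₁ = algebraMap S K x * algebraMap R K r₂ :=
      (div_eq_iff hr₂K).mp hr
    have hr₁0 : r₁ ≠ 0 := by
      intro hh
      rw [hh, map_zero] at hr1K
      rcases mul_eq_zero.mp hr1K.symm with h' | h'
      · exact hxK h'
      · exact hr₂K h'
    have hr1S : algebraMap R S r₁ = x * algebraMap R S r₂ := by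
      apply IsFractionRing.injective S K
      rw [map_mul, ← IsScalarTower.algebraMap_apply R S K,
        ← IsScalarTower.algebraMap_apply R S K, hr1K]
    -- semigroup helpers
    have hmulΦ : ∀ m' ∈ Φ, ∀ n : ℕ, (((n + 1 : ℕ)) : ℝ) * m' ∈ Φ := by
      intro m' hm' n
      induction n with
      | zero => simpa using hm'
      | succ n ih =>
        have heq : (((n + 2 : ℕ)) : ℝ) * m' = (((n + 1 : ℕ)) : ℝ) * m' + m' := by
          push_cast; ring
        rw [heq]; exact hΦ _ ih _ hm'
    have hmulΦ' : ∀ m' ∈ Φ, ∀ n : ℕ, 0 < n → ((n : ℝ) * m') ∈ Φ := by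
      intro m' hm' n hn
      obtain ⟨n', rfl⟩ := Nat.exists_eq_succ_of_ne_zero hn.ne'
      exact hmulΦ m' hm' n'
    have hpowgr : ∀ s ∈ Φ, ∀ n : ℕ, (a s) ^ (n + 1) ≤ a ((((n + 1 : ℕ)) : ℝ) * s) := by
      intro s hs n
      induction n with
      | zero => simpa using le_refl (a s)
      | succ n ih =>
        have heq : (((n + 2 : ℕ)) : ℝ) * s = (((n + 1 : ℕ)) : ℝ) * s + s := by
          push_cast; ring
        rw [heq]
        calc (a s) ^ (n + 2) = (a s) ^ (n + 1) * a s := pow_succ _ _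
          _ ≤ a ((((n + 1 : ℕ)) : ℝ) * s) * a s := Ideal.mul_mono ih le_rfl
          _ ≤ a ((((n + 1 : ℕ)) : ℝ) * s + s) := hgr _ (hmulΦ s hs n) _ hs
    have hpowgr' : ∀ s ∈ Φ, ∀ n : ℕ, 0 < n → (a s) ^ n ≤ a ((n : ℝ) * s) := by
      intro s hs n hn
      obtain ⟨n', rfl⟩ := Nat.exists_eq_succ_of_ne_zero hn.ne'
      exact hpowgr s hs n'
    refine ⟨f ^ B * r₁, mul_ne_zero (pow_ne_zero _ hf0) hr₁0, ?_⟩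
    intro m hm T hT y hy
    obtain ⟨⟨ℓ, hℓ, hℓm, hTi⟩, _⟩ := hT
    -- Step 1: push `T` into every nonzero TestClosed ideal of `S` at level `ℓ`
    have hstep1 : ∀ J : Ideal S, J ≠ ⊥ → TestClosed S p (a ((ℓ:ℝ) * m)) (1/(ℓ:ℝ)) J →
        ∀ y' ∈ T, algebraMap R S (f ^ B * y') ∈ J := by
      intro J hJne hJtc
      obtain ⟨t₀, ht₀T, ht₀0⟩ := Submodule.exists_mem_ne_zero_of_ne_bot hTi.1
      obtain ⟨w₀, hw₀J, hw₀0⟩ := Submodule.exists_mem_ne_zero_of_ne_bot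
        (Cor413.comap_ne_bot_of_ne_bot (K := K) (R := R) hJne)
      have hcT : w₀ * t₀ ∈ T := Ideal.mul_mem_left _ _ ht₀T
      have hc0 : w₀ * t₀ ≠ 0 := mul_ne_zero hw₀0 ht₀0
      have hle := Cor413.isTestIdeal_le_tc hnfR (by positivity) hTi hcT hc0
      intro y' hy'
      have hy'' : y' ∈ Cor413.TC p ((a ((ℓ:ℝ) * m)).comap (algebraMap R S)) (1/(ℓ:ℝ))
          (w₀ * t₀) := hle hy'
      clear hy'
      induction hy'' using Submodule.span_induction with
      | mem v hv =>
        obtain ⟨e, he, φ, hφ, u, hu, rfl⟩ := hv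
        obtain ⟨ψ, hψlin, hψR⟩ := hext e he φ hφ
        rw [← hψR]
        have hm1 : algebraMap R S ((w₀ * t₀) * u) ∈
            J * (a ((ℓ:ℝ) * m)) ^ ⌈(1/(ℓ:ℝ)) * ((p:ℝ) ^ e - 1)⌉₊ := by
          rw [map_mul]
          refine Ideal.mul_mem_mul ?_ ?_
          · rw [map_mul]
            exact Ideal.mul_mem_right _ _ (Ideal.mem_comap.mp hw₀J)
          · exact Ideal.mem_comap.mp (Cor413.pow_comap_le (algebraMap R S) _ _ hu)
        exact hJtc e he ψ hψlin _ hm1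
      | zero => simpa using J.zero_mem
      | add v w hv hw ihv ihw => rw [mul_add, map_add]; exact J.add_mem ihv ihw
      | smul c v hv ih =>
        have hcv : f ^ B * (c • v) = c * (f ^ B * v) := by rw [smul_eq_mul]; ring
        rw [hcv, map_mul]
        exact Ideal.mul_mem_left _ _ ih
    -- the minimal test ideal of `S` at level `ℓ`
    obtain ⟨t₀, ht₀T, ht₀0⟩ := Submodule.exists_mem_ne_zero_of_ne_bot hTi.1
    have hτSmem : ∀ y' ∈ T, algebraMap R S (f ^ B * y') ∈
        Cor413.tauStar p (a ((ℓ:ℝ) * m)) (1/(ℓ:ℝ)) := by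
      intro y' hy'
      exact Cor413.mem_tauStar fun J h1 h2 => hstep1 J h1 h2 y' hy'
    have hτSne : Cor413.tauStar p (a ((ℓ:ℝ) * m)) (1/(ℓ:ℝ)) ≠ ⊥ := by
      intro hb
      have hmem := hτSmem t₀ ht₀T
      rw [hb, Ideal.mem_bot] at hmem
      exact (mul_ne_zero (pow_ne_zero _ hf0) ht₀0)
        (hinj (hmem.trans (map_zero _).symm))
    have hτSTi : IsTestIdeal S p (a ((ℓ:ℝ) * m)) (1/(ℓ:ℝ))
        (Cor413.tauStar p (a ((ℓ:ℝ) * m)) (1/(ℓ:ℝ))) := Cor413.isTestIdeal_tauStar hτSne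
    -- a maximal element among level test ideals
    have hwf : WellFounded ((· > ·) : Ideal S → Ideal S → Prop) := IsWellFounded.wf
    obtain ⟨Tmax, hTmax𝒯, hTmaxmax⟩ := hwf.has_min
      {T' : Ideal S | ∃ n : ℕ, 0 < n ∧ ((n:ℝ) * m) ∈ Φ ∧
        IsTestIdeal S p (a ((n:ℝ) * m)) (1/(n:ℝ)) T'}
      ⟨Cor413.tauStar p (a ((ℓ:ℝ) * m)) (1/(ℓ:ℝ)), ℓ, hℓ, hℓm, hτSTi⟩
    obtain ⟨ℓ₁, hℓ₁, hℓ₁m, hTmaxTi⟩ := hTmax𝒯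
    have hclause2 : ∀ n : ℕ, 0 < n → ((n:ℝ) * m) ∈ Φ → ∀ J' : Ideal S,
        IsTestIdeal S p (a ((n:ℝ) * m)) (1/(n:ℝ)) J' → J' ≤ Tmax := by
      intro n hn hnm J' hJ'
      have hL : 0 < n * ℓ₁ := Nat.mul_pos hn hℓ₁
      have hLm : (((n * ℓ₁ : ℕ) : ℝ) * m) ∈ Φ := hmulΦ' m hm _ hL
      obtain ⟨w, hwa, hw0⟩ := Submodule.exists_mem_ne_zero_of_ne_bot (hne _ hLm)
      obtain ⟨t', ht'J, ht'0⟩ := Submodule.exists_mem_ne_zero_of_ne_bot hJ'.1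
      have hτLmem : w * t' ∈
          Cor413.tauStar p (a (((n * ℓ₁ : ℕ) : ℝ) * m)) (1/((n * ℓ₁ : ℕ) : ℝ)) := by
        refine Cor413.mem_tauStar fun J h1 h2 => ?_
        have hcol : TestClosed S p (a ((n:ℝ) * m)) (1/(n:ℝ)) (Cor413.colonW J w) :=
          Cor413.colonW_testClosed (by omega) hp1 h2 hwa _ _
        have hcolne : Cor413.colonW J w ≠ ⊥ := fun hb =>
          h1 (le_bot_iff.mp (hb ▸ Cor413.le_colonW))
        exact Cor413.mem_colonW.mp (hJ'.2.2 _ hcolne hcol ht'J)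
      have hτLne : Cor413.tauStar p (a (((n * ℓ₁ : ℕ) : ℝ) * m)) (1/((n * ℓ₁ : ℕ) : ℝ)) ≠ ⊥ := by
        intro hb
        rw [hb, Ideal.mem_bot] at hτLmem
        exact (mul_ne_zero hw0 ht'0) hτLmem
      have hτLTi := Cor413.isTestIdeal_tauStar hτLne
      have hpow1 : (a ((n:ℝ) * m)) ^ ℓ₁ ≤ a (((n * ℓ₁ : ℕ) : ℝ) * m) := by
        have h' := hpowgr' _ hnm ℓ₁ hℓ₁
        have heq : ((ℓ₁:ℝ)) * ((n:ℝ) * m) = ((n * ℓ₁ : ℕ) : ℝ) * m := by push_cast; ring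
        rwa [heq] at h'
      have hpow2 : (a ((ℓ₁:ℝ) * m)) ^ n ≤ a (((n * ℓ₁ : ℕ) : ℝ) * m) := by
        have h' := hpowgr' _ hℓ₁m n hn
        have heq : ((n:ℝ)) * ((ℓ₁:ℝ) * m) = ((n * ℓ₁ : ℕ) : ℝ) * m := by push_cast; ring
        rwa [heq] at h'
      have hJ'τL : J' ≤ Cor413.tauStar p (a (((n * ℓ₁ : ℕ) : ℝ) * m)) (1/((n * ℓ₁ : ℕ) : ℝ)) :=
        Cor413.isTestIdeal_le_of_pow_le hnfS hn hℓ₁ rfl hp1 hJ'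
          (Cor413.tauStar_testClosed _ _) hτLne hpow1 (hne _ hnm)
      have hTmaxτL : Tmax ≤
          Cor413.tauStar p (a (((n * ℓ₁ : ℕ) : ℝ) * m)) (1/((n * ℓ₁ : ℕ) : ℝ)) :=
        Cor413.isTestIdeal_le_of_pow_le hnfS hℓ₁ hn (Nat.mul_comm n ℓ₁) hp1 hTmaxTi
          (Cor413.tauStar_testClosed _ _) hτLne hpow2 (hne _ hℓ₁m)
      have hEq : Tmax = Cor413.tauStar p (a (((n * ℓ₁ : ℕ) : ℝ) * m)) (1/((n * ℓ₁ : ℕ) : ℝ)) := by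
        rcases eq_or_lt_of_le hTmaxτL with h' | h'
        · exact h'
        · exact absurd h' (hTmaxmax _ ⟨n * ℓ₁, hL, hLm, hτLTi⟩)
      rw [hEq]
      exact hJ'τL
    have hasymp : IsAsympTestIdeal S p Φ a m Tmax := ⟨⟨ℓ₁, hℓ₁, hℓ₁m, hTmaxTi⟩, hclause2⟩
    have hτSTmax : Cor413.tauStar p (a ((ℓ:ℝ) * m)) (1/(ℓ:ℝ)) ≤ Tmax :=
      hclause2 ℓ hℓ hℓm _ hτSTi
    rw [Ideal.mem_comap]
    have h1 : algebraMap R S (f ^ B * y) ∈ Tmax := hτSTmax (hτSmem y hy)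
    have h2 : x * algebraMap R S (f ^ B * y) ∈ a m := hx m hm Tmax hasymp _ h1
    have h3 : algebraMap R S (f ^ B * r₁ * y)
        = algebraMap R S r₂ * (x * algebraMap R S (f ^ B * y)) := by
      rw [show f ^ B * r₁ * y = r₁ * (f ^ B * y) by ring, map_mul, hr1S]
      ring
    rw [h3]
    exact Ideal.mul_mem_left _ _ h2
end
end

section
/- Let A be a Noetherian domain and 𝔭 a prime ideal of A. Let {𝔞_i}_{i∈I} and {J_i}_{i∈I} be collections of ideals of A, indexed by an arbitrary set I, such that each 𝔞_i is 𝔭-primary. Then ⋂_{i∈I} (𝔞_i A_𝔭 : J_i A_𝔭) = (⋂_{i∈I} (𝔞_i : J_i))·A_𝔭 as ideals of the localization A_𝔭. In particular, ⋂_{i∈I} (𝔞_i A_𝔭 : J_i A_𝔭) ≠ (0) if and only if ⋂_{i∈I} (𝔞_i : J_i) ≠ (0). (Lemma 5.1(2).) -/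
open scoped TensorProduct

noncomputable section

open Paper

/-- **Lemma 5.1(2).** Let `A` be a Noetherian domain, `𝔭` a prime, and `{𝔞ᵢ}`, `{Jᵢ}` families
of ideals with each `𝔞ᵢ` being `𝔭`-primary.  Then
`⋂ᵢ (𝔞ᵢ A_𝔭 : Jᵢ A_𝔭) = (⋂ᵢ (𝔞ᵢ : Jᵢ)) A_𝔭`; in particular the left side is nonzero iff
the right side is. -/
theorem statement17 (A : Type*) [CommRing A] [IsDomain A] [IsNoetherianRing A]
    (𝔭 : Ideal A) [𝔭.IsPrime] {ι : Type*} (𝔞 J : ι → Ideal A)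
    (hprim : ∀ i, (𝔞 i).IsPrimary ∧ (𝔞 i).radical = 𝔭) :
    (⨅ i, ((𝔞 i).map (algebraMap A (Localization.AtPrime 𝔭))).colon
        ((J i).map (algebraMap A (Localization.AtPrime 𝔭)))) =
      (⨅ i, (𝔞 i).colon (J i)).map (algebraMap A (Localization.AtPrime 𝔭)) ∧
    ((⨅ i, ((𝔞 i).map (algebraMap A (Localization.AtPrime 𝔭))).colon
        ((J i).map (algebraMap A (Localization.AtPrime 𝔭)))) ≠ ⊥ ↔
      (⨅ i, (𝔞 i).colon (J i)) ≠ ⊥) := by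
  set L := Localization.AtPrime 𝔭
  set f := algebraMap A L with hf
  have hinj : Function.Injective f :=
    IsLocalization.injective L 𝔭.primeCompl_le_nonZeroDivisors
  -- saturation of primary ideals
  have hsat : ∀ i, ∀ s ∉ 𝔭, ∀ x : A, s * x ∈ 𝔞 i → x ∈ 𝔞 i := by
    intro i s hs x hsx
    rcases (Ideal.isPrimary_iff.mp (hprim i).1).2 (mul_comm s x ▸ hsx) with h | h
    · exact h
    · exact absurd ((hprim i).2 ▸ h) hs
  -- key equality
  have key : (⨅ i, ((𝔞 i).map f).colon ((J i).map f)) = (⨅ i, (𝔞 i).colon (J i)).map f := by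
    apply le_antisymm
    · intro x hx
      obtain ⟨⟨a, s⟩, rfl⟩ := IsLocalization.mk'_surjective 𝔭.primeCompl x
      rw [IsLocalization.mk'_mem_map_algebraMap_iff 𝔭.primeCompl]
      refine ⟨1, Submonoid.one_mem _, ?_⟩
      rw [one_mul, Ideal.mem_iInf]
      intro i
      rw [Submodule.mem_colon]
      intro j hj
      have hx' : IsLocalization.mk' L a s * f j ∈ (𝔞 i).map f := by
        have := Ideal.mem_iInf.mp hx i
        exact (Submodule.mem_colon.mp this) (f j) (Ideal.mem_map_of_mem f hj)
      have h2 : IsLocalization.mk' L (a * j) s * f (s : A) ∈ (𝔞 i).map f := by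
        rw [IsLocalization.mk'_spec, map_mul]
        have he : f a * f j = IsLocalization.mk' L a s * f j * f (s : A) := by
          rw [← IsLocalization.mk'_spec L a s]; ring
        rw [he]
        exact Ideal.mul_mem_right _ _ hx'
      have h3 : IsLocalization.mk' L (a * j) s ∈ (𝔞 i).map f := by
        rw [← Ideal.unit_mul_mem_iff_mem _ (IsLocalization.map_units L s), mul_comm]
        exact h2
      rw [IsLocalization.mk'_mem_map_algebraMap_iff 𝔭.primeCompl] at h3
      obtain ⟨t, ht, hta⟩ := h3
      rw [smul_eq_mul]
      exact hsat i t ht _ hta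
    · rw [Ideal.map_le_iff_le_comap]
      intro a ha
      rw [Ideal.mem_comap, Ideal.mem_iInf]
      intro i
      rw [Submodule.mem_colon]
      intro y hy
      rw [SetLike.mem_coe] at hy
      rw [IsLocalization.mem_map_algebraMap_iff 𝔭.primeCompl] at hy ⊢
      obtain ⟨⟨⟨j, hj⟩, t⟩, hjt⟩ := hy
      have hai : a ∈ (𝔞 i).colon (J i) := Ideal.mem_iInf.mp ha i
      have haj : a * j ∈ 𝔞 i := by
        have := Submodule.mem_colon.mp hai j hj
        rwa [smul_eq_mul] at this
      refine ⟨⟨⟨a * j, haj⟩, t⟩, ?_⟩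
      simp only [smul_eq_mul, map_mul]
      rw [mul_assoc, hjt, ← map_mul]
  refine ⟨key, ?_⟩
  rw [key]
  constructor
  · intro h hbot
    exact h (by rw [hbot, Ideal.map_bot])
  · intro h hbot
    apply h
    ext a
    simp only [Ideal.mem_bot]
    constructor
    · intro ha
      have : f a ∈ (⨅ i, (𝔞 i).colon (J i)).map f := Ideal.mem_map_of_mem f ha
      rw [hbot, Ideal.mem_bot] at this
      exact hinj (by rw [this, map_zero])
    · rintro rfl; exact Ideal.zero_mem _
end
end

section
/- Let k be a perfect field of characteristic p > 0, let d be a positive integer, and let v_1, …, v_d be positive real numbers that are linearly independent over ℤ. In the polynomial ring R = k[x_1, …, x_d], for each real m ≥ 0 let 𝔞_m be the (monomial) ideal generated by {x_1^{a_1}⋯x_d^{a_d} : a_i ∈ ℤ≥0, a_1 v_1 + ⋯ + a_d v_d ≥ m}; the family 𝔞_• = {𝔞_m}_{m∈ℝ≥0} is a graded family of nonzero ideals of R. Then for every m ∈ ℝ≥0, (x_1⋯x_d)·τ_m(R, 𝔞_•) ⊆ 𝔞_m; that is, x_1⋯x_d lies in the intersection over all m ≥ 0 of the colon ideals (𝔞_m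 : τ_m(R, 𝔞_•)). (Monomial case established in the proof of Theorem B.) -/
open scoped TensorProduct

noncomputable section

open Paper


namespace S19

open MvPolynomial

variable {k : Type*} [Field k] {d : ℕ}

lemma prodX (f : Fin d → ℕ) :
    (∏ i, X i ^ f i : MvPolynomial (Fin d) k) =
      monomial (Finsupp.equivFunOnFinite.symm f) 1 := by
  classical
  rw [← prod_X_pow_eq_monomial]
  refine (Finset.prod_subset (Finset.subset_univ _) ?_).symm
  intro i _ hi
  have h0 : Finsupp.equivFunOnFinite.symm f i = 0 := Finsupp.notMem_support_iff.mp hi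
  have : f i = 0 := h0
  rw [this, pow_zero]

lemma monomialX (b : Fin d →₀ ℕ) :
    (monomial b (1 : k)) = ∏ i, X i ^ b i := by
  rw [prodX (fun i => b i), Finsupp.equivFunOnFinite_symm_coe]

lemma support_bound {v : Fin d → ℝ} (hv : ∀ i, 0 ≤ v i) (V : ℝ)
    {m : ℝ} {S : Set (MvPolynomial (Fin d) k)}
    (hS : ∀ z ∈ S, ∃ b : Fin d →₀ ℕ, m ≤ (∑ i, (b i : ℝ) * v i) + V ∧ z = monomial b 1)
    {z} (hz : z ∈ Ideal.span S) :
    ∀ b ∈ z.support, m ≤ (∑ i, (b i : ℝ) * v i) + V := by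
  classical
  refine Submodule.span_induction (p := fun z _ => ∀ b ∈ z.support, m ≤ (∑ i, (b i : ℝ) * v i) + V)
    ?_ ?_ ?_ ?_ hz
  · intro x hx b hb
    obtain ⟨b0, hb0, rfl⟩ := hS x hx
    rw [support_monomial] at hb
    simp only [if_neg (one_ne_zero (α := k))] at hb
    rw [Finset.mem_singleton] at hb
    subst hb; exact hb0
  · intro b hb
    rw [MvPolynomial.support_zero] at hb
    exact absurd hb (Finset.notMem_empty b)
  · intro x y hx hy ihx ihy b hb
    rcases Finset.mem_union.mp (MvPolynomial.support_add hb) with h | h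
    · exact ihx b h
    · exact ihy b h
  · intro r x hx ih b hb
    rw [smul_eq_mul] at hb
    have := MvPolynomial.support_mul r x hb
    rw [Finset.mem_add] at this
    obtain ⟨b1, hb1, b2, hb2, rfl⟩ := this
    have h2 := ih b2 hb2
    have hpos : (0:ℝ) ≤ ∑ i, (b1 i : ℝ) * v i :=
      Finset.sum_nonneg fun i _ => mul_nonneg (Nat.cast_nonneg _) (hv i)
    have : (∑ i, ((b1 + b2) i : ℝ) * v i) = (∑ i, (b1 i : ℝ) * v i) + ∑ i, (b2 i : ℝ) * v i := by
      rw [← Finset.sum_add_distrib]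
      refine Finset.sum_congr rfl fun i _ => ?_
      simp [Finsupp.add_apply, add_mul]
    rw [this]; linarith

lemma pow_surj (p : ℕ) [Fact p.Prime] [CharP k p] [PerfectField k] (e : ℕ) (c : k) :
    ∃ w : k, w ^ p ^ e = c := by
  haveI : ExpChar k p := ExpChar.prime Fact.out
  induction e generalizing c with
  | zero => exact ⟨c, by simp⟩
  | succ n ih =>
    obtain ⟨u, hu⟩ := surjective_frobenius k p c
    obtain ⟨w, hw⟩ := ih u
    exact ⟨w, by rw [pow_succ, pow_mul, hw, ← hu]; rfl⟩

lemma monomial_decomp (q : ℕ) (b : Fin d →₀ ℕ) (c : k) (w : k) (hw : w ^ q = c) :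
    monomial b c =
      (C w * monomial (b.mapRange (· / q) (Nat.zero_div q)) 1) ^ q *
        monomial (b.mapRange (· % q) (Nat.zero_mod q)) 1 := by
  have hb : q • b.mapRange (· / q) (Nat.zero_div q) + b.mapRange (· % q) (Nat.zero_mod q) = b := by
    ext i
    simp only [Finsupp.add_apply, Finsupp.smul_apply, Finsupp.mapRange_apply, smul_eq_mul]
    exact Nat.div_add_mod (b i) q
  rw [mul_pow, ← C_pow, hw, monomial_pow, one_pow, C_mul_monomial, monomial_mul, hb]
  simp

end S19

open MvPolynomial

/-- **Monomial case in the proof of Theorem B.** Let `k` be a perfect field of characteristic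
`p > 0`, `v₁, …, v_d` positive reals linearly independent over `ℤ`, and in
`R = k[x₁, …, x_d]` let `𝔞_m` be the ideal generated by the monomials `x^a` with
`∑ aᵢ vᵢ ≥ m`.  Then `𝔞_•` is a graded family of nonzero ideals and
`(x₁ ⋯ x_d) · τ_m(R, 𝔞_•) ⊆ 𝔞_m` for every `m ≥ 0`. -/
theorem statement19 (p : ℕ) [Fact p.Prime]
    (k : Type*) [Field k] [PerfectField k] [CharP k p]
    (d : ℕ) (hd : 0 < d) (v : Fin d → ℝ) (hv : ∀ i, 0 < v i)
    (hind : ∀ c : Fin d → ℤ, (∑ i, (c i : ℝ) * v i) = 0 → c = 0)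
    (a : ℝ → Ideal (MvPolynomial (Fin d) k))
    (ha : ∀ m : ℝ, a m = Ideal.span {z : MvPolynomial (Fin d) k |
      ∃ e : Fin d → ℕ, m ≤ (∑ i, (e i : ℝ) * v i) ∧ z = ∏ i, MvPolynomial.X i ^ e i}) :
    (∀ s t : ℝ, 0 ≤ s → 0 ≤ t → a s * a t ≤ a (s + t)) ∧
    (∀ s : ℝ, 0 ≤ s → a s ≠ ⊥) ∧
    ∀ m : ℝ, 0 ≤ m → ∀ T : Ideal (MvPolynomial (Fin d) k),
      IsAsympTestIdeal (MvPolynomial (Fin d) k) p {x : ℝ | 0 ≤ x} a m T →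
      ∀ y ∈ T, (∏ i, MvPolynomial.X i) * y ∈ a m := by
  classical
  haveI hdne : Nonempty (Fin d) := Fin.pos_iff_nonempty.mp hd
  have hv' : ∀ i, (0:ℝ) ≤ v i := fun i => (hv i).le
  set V : ℝ := ∑ i, v i with hVdef
  have hVpos : 0 < V := Finset.sum_pos (fun i _ => hv i) Finset.univ_nonempty
  -- sum helper
  have hsum_add : ∀ (e f : Fin d → ℕ),
      (∑ i, ((e i + f i : ℕ) : ℝ) * v i) = (∑ i, (e i : ℝ) * v i) + ∑ i, (f i : ℝ) * v i := by
    intro e f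
    rw [← Finset.sum_add_distrib]
    refine Finset.sum_congr rfl fun i _ => ?_
    push_cast
    ring
  -- membership of generators
  have hmema : ∀ (s : ℝ) (e : Fin d → ℕ), s ≤ ∑ i, (e i : ℝ) * v i →
      (∏ i, X i ^ e i : MvPolynomial (Fin d) k) ∈ a s := by
    intro s e he
    rw [ha]
    exact Ideal.subset_span ⟨e, he, rfl⟩
  -- graded family
  have hmul : ∀ s t : ℝ, a s * a t ≤ a (s + t) := by
    intro s t
    rw [ha s, ha t, Ideal.span_mul_span]
    refine Ideal.span_le.mpr ?_
    rintro z hz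
    simp only [Set.mem_mul] at hz
    obtain ⟨x, ⟨e, he, rfl⟩, y, ⟨f, hf, rfl⟩, rfl⟩ := hz
    have hprod : (∏ i, X i ^ e i : MvPolynomial (Fin d) k) * ∏ i, X i ^ f i
        = ∏ i, X i ^ (e i + f i) := by
      rw [← Finset.prod_mul_distrib]
      exact Finset.prod_congr rfl fun i _ => (pow_add _ _ _).symm
    rw [hprod]
    refine hmema _ (fun i => e i + f i) ?_
    calc s + t ≤ (∑ i, (e i : ℝ) * v i) + ∑ i, (f i : ℝ) * v i := add_le_add he hf
      _ = ∑ i, ((e i + f i : ℕ) : ℝ) * v i := (hsum_add e f).symm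
  -- constants
  have hconst : ∀ s : ℝ, ∃ n : ℕ, s ≤ ∑ i, ((n : ℕ) : ℝ) * v i := by
    intro s
    refine ⟨⌈s / V⌉₊, ?_⟩
    have h1 : s / V ≤ (⌈s / V⌉₊ : ℝ) := Nat.le_ceil _
    have h2 : (∑ i, ((⌈s / V⌉₊ : ℕ) : ℝ) * v i) = (⌈s / V⌉₊ : ℝ) * V := by
      rw [hVdef, Finset.mul_sum]
    rw [h2]
    calc s = s / V * V := by field_simp
      _ ≤ (⌈s / V⌉₊ : ℝ) * V := by nlinarith
  -- nonzero
  have hane : ∀ s : ℝ, a s ≠ ⊥ := by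
    intro s hbot
    obtain ⟨n, hn⟩ := hconst s
    have hmem : (∏ i, X i ^ (fun _ : Fin d => n) i : MvPolynomial (Fin d) k) ∈ a s :=
      hmema s (fun _ => n) hn
    rw [hbot, Ideal.mem_bot, S19.prodX] at hmem
    exact one_ne_zero (MvPolynomial.monomial_eq_zero.mp hmem)
  refine ⟨fun s t _ _ => hmul s t, fun s _ => hane s, ?_⟩
  intro m hm T hT
  obtain ⟨⟨ℓ, hℓ, _, Tne, Tcl, Tmin⟩, _⟩ := hT
  have hℓR : (0:ℝ) < (ℓ : ℝ) := Nat.cast_pos.mpr hℓ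
  -- the auxiliary ideal J
  set Sg : Set (MvPolynomial (Fin d) k) :=
    {z | ∃ e : Fin d → ℕ, m ≤ (∑ i, (e i : ℝ) * v i) + V ∧ z = ∏ i, X i ^ e i} with hSgdef
  set J : Ideal (MvPolynomial (Fin d) k) := Ideal.span Sg with hJdef
  have hmemJ : ∀ e : Fin d → ℕ, m ≤ (∑ i, (e i : ℝ) * v i) + V →
      (∏ i, X i ^ e i : MvPolynomial (Fin d) k) ∈ J := by
    intro e he
    exact Ideal.subset_span ⟨e, he, rfl⟩
  have hJne : J ≠ ⊥ := by
    intro hbot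
    obtain ⟨n, hn⟩ := hconst m
    have hmem : (∏ i, X i ^ (fun _ : Fin d => n) i : MvPolynomial (Fin d) k) ∈ J :=
      hmemJ (fun _ => n) (by linarith [hVpos])
    rw [hbot, Ideal.mem_bot, S19.prodX] at hmem
    exact one_ne_zero (MvPolynomial.monomial_eq_zero.mp hmem)
  -- a 0 = ⊤ and powers
  have ha0 : a 0 = ⊤ := by
    rw [Ideal.eq_top_iff_one]
    have h1 := hmema 0 (fun _ => 0) (by simp)
    simpa using h1
  have hpow : ∀ (n : ℕ) (s : ℝ), a s ^ n ≤ a ((n : ℝ) * s) := by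
    intro n s
    induction n with
    | zero =>
      rw [pow_zero, Nat.cast_zero, zero_mul, ha0, Ideal.one_eq_top]
    | succ n ih =>
      rw [pow_succ]
      calc a s ^ n * a s ≤ a ((n : ℝ) * s) * a s := Ideal.mul_mono_left ih
        _ ≤ a ((n : ℝ) * s + s) := hmul _ _
        _ = a (((n + 1 : ℕ) : ℝ) * s) := by rw [show (((n + 1 : ℕ) : ℝ)) * s = (n : ℝ) * s + s by push_cast; ring]
  -- J is test-closed for the pair (a (ℓ m), 1/ℓ)
  have hJcl : TestClosed (MvPolynomial (Fin d) k) p (a ((ℓ : ℝ) * m)) (1 / (ℓ : ℝ)) J := by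
    intro e he φ hφ z hz
    set q : ℕ := p ^ e with hqdef
    have hq0 : 0 < q := pow_pos (Fact.out (p := p.Prime)).pos e
    have hqR : (q : ℝ) = (p : ℝ) ^ e := by push_cast [hqdef]; ring
    have hqRpos : (0:ℝ) < (q : ℝ) := Nat.cast_pos.mpr hq0
    set N : ℕ := ⌈(1 / (ℓ : ℝ)) * ((p : ℝ) ^ e - 1)⌉₊ with hNdef
    have hNb : (p : ℝ) ^ e - 1 ≤ (N : ℝ) * (ℓ : ℝ) := by
      have h1 : (1 / (ℓ : ℝ)) * ((p : ℝ) ^ e - 1) ≤ (N : ℝ) := by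
        rw [hNdef]; exact Nat.le_ceil _
      rw [div_mul_eq_mul_div, one_mul, div_le_iff₀ hℓR] at h1
      exact h1
    -- support bound on z
    have hz2 : z ∈ J * a ((N : ℝ) * ((ℓ : ℝ) * m)) :=
      Ideal.mul_mono_right (hpow N ((ℓ : ℝ) * m)) hz
    have hz3 : z ∈ Ideal.span Sg * Ideal.span {z : MvPolynomial (Fin d) k |
        ∃ f : Fin d → ℕ, (N : ℝ) * ((ℓ : ℝ) * m) ≤ (∑ i, (f i : ℝ) * v i) ∧ z = ∏ i, X i ^ f i} := by
      rw [← ha]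
      exact hz2
    rw [Ideal.span_mul_span] at hz3
    have hsupp : ∀ b ∈ z.support, m + (N : ℝ) * ((ℓ : ℝ) * m) ≤ (∑ i, (b i : ℝ) * v i) + V := by
      refine S19.support_bound hv' V ?_ hz3
      rintro x hx
      simp only [Set.mem_mul] at hx
      obtain ⟨x1, hx1, x2, hx2, rfl⟩ := hx
      obtain ⟨e1, he1, rfl⟩ := hx1
      obtain ⟨e2, he2, rfl⟩ := hx2
      refine ⟨Finsupp.equivFunOnFinite.symm (fun i => e1 i + e2 i), ?_, ?_⟩
      · have hco : (∑ i, ((Finsupp.equivFunOnFinite.symm (fun i => e1 i + e2 i)) i : ℝ) * v i)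
            = ∑ i, ((e1 i + e2 i : ℕ) : ℝ) * v i := rfl
        rw [hco, hsum_add]
        linarith
      · rw [← S19.prodX, ← Finset.prod_mul_distrib]
        exact Finset.prod_congr rfl fun i _ => (pow_add _ _ _).symm
    have hkey : ∀ b ∈ z.support, (q : ℝ) * m ≤ (∑ i, (b i : ℝ) * v i) + V := by
      intro b hb
      have h1 := hsupp b hb
      have h2 : ((p : ℝ) ^ e - 1) * m ≤ ((N : ℝ) * (ℓ : ℝ)) * m :=
        mul_le_mul_of_nonneg_right hNb hm
      rw [hqR]
      nlinarith
    -- conclude φ z ∈ J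
    rw [MvPolynomial.as_sum z, map_sum]
    refine Ideal.sum_mem _ ?_
    intro b hb
    obtain ⟨w, hw⟩ := S19.pow_surj p e (MvPolynomial.coeff b z)
    rw [← hqdef] at hw
    rw [S19.monomial_decomp q b _ w hw]
    rw [hqdef] at *
    rw [hφ (C w * monomial (b.mapRange (· / p ^ e) (Nat.zero_div _)) 1)
      (monomial (b.mapRange (· % p ^ e) (Nat.zero_mod _)) 1)]
    -- the divided monomial lies in J
    have hdiv : ∀ i : Fin d, ((b i : ℝ) + 1) * v i
        ≤ ((p ^ e : ℕ) : ℝ) * (((b.mapRange (· / p ^ e) (Nat.zero_div _)) i : ℝ) + 1) * v i := by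
      intro i
      have h3 : b i % p ^ e < p ^ e := Nat.mod_lt _ hq0
      have h2 : p ^ e * (b i / p ^ e) + b i % p ^ e = b i := Nat.div_add_mod (b i) (p ^ e)
      have h1 : b i + 1 ≤ p ^ e * (b i / p ^ e + 1) := by
        rw [Nat.mul_add, Nat.mul_one]
        linarith
      have h4 : ((b i : ℝ) + 1) ≤ ((p ^ e : ℕ) : ℝ) * ((b i / p ^ e : ℕ) : ℝ) + ((p ^ e : ℕ) : ℝ) := by
        have := (Nat.cast_le (α := ℝ)).mpr h1
        push_cast at this ⊢
        linarith
      have h5 : ((b.mapRange (· / p ^ e) (Nat.zero_div _)) i : ℝ) = ((b i / p ^ e : ℕ) : ℝ) := by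
        rw [Finsupp.mapRange_apply]
      rw [h5]
      calc ((b i : ℝ) + 1) * v i
          ≤ (((p ^ e : ℕ) : ℝ) * (((b i / p ^ e : ℕ) : ℝ) + 1)) * v i := by
            refine mul_le_mul_of_nonneg_right ?_ (hv' i)
            calc ((b i : ℝ) + 1) ≤ ((p ^ e : ℕ) : ℝ) * ((b i / p ^ e : ℕ) : ℝ) + ((p ^ e : ℕ) : ℝ) := h4
              _ = ((p ^ e : ℕ) : ℝ) * (((b i / p ^ e : ℕ) : ℝ) + 1) := by ring
        _ = ((p ^ e : ℕ) : ℝ) * (((b i / p ^ e : ℕ) : ℝ) + 1) * v i := by ring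
    have hval : m ≤ (∑ i, ((b.mapRange (· / p ^ e) (Nat.zero_div _)) i : ℝ) * v i) + V := by
      have hA : (∑ i, ((b i : ℝ) + 1) * v i) = (∑ i, (b i : ℝ) * v i) + V := by
        rw [hVdef, ← Finset.sum_add_distrib]
        exact Finset.sum_congr rfl fun i _ => by ring
      have hB : ((p ^ e : ℕ) : ℝ) * ((∑ i, ((b.mapRange (· / p ^ e) (Nat.zero_div _)) i : ℝ) * v i) + V)
          = ∑ i, ((p ^ e : ℕ) : ℝ) * (((b.mapRange (· / p ^ e) (Nat.zero_div _)) i : ℝ) + 1) * v i := by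
        rw [hVdef, mul_add, Finset.mul_sum, Finset.mul_sum, ← Finset.sum_add_distrib]
        exact Finset.sum_congr rfl fun i _ => by ring
      have hAB : (∑ i, ((b i : ℝ) + 1) * v i)
          ≤ ∑ i, ((p ^ e : ℕ) : ℝ) * (((b.mapRange (· / p ^ e) (Nat.zero_div _)) i : ℝ) + 1) * v i :=
        Finset.sum_le_sum fun i _ => hdiv i
      have hk := hkey b hb
      rw [hA, ← hB] at hAB
      have hq2 : ((p ^ e : ℕ) : ℝ) * m ≤ ((p ^ e : ℕ) : ℝ) *
          ((∑ i, ((b.mapRange (· / p ^ e) (Nat.zero_div _)) i : ℝ) * v i) + V) :=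
        hk.trans hAB
      exact le_of_mul_le_mul_left hq2 (by exact_mod_cast hq0)
    have hmemb1 : (monomial (b.mapRange (· / p ^ e) (Nat.zero_div _)) (1 : k)) ∈ J := by
      rw [S19.monomialX]
      exact hmemJ _ hval
    have hre : (C w * monomial (b.mapRange (· / p ^ e) (Nat.zero_div _)) 1) *
        φ (monomial (b.mapRange (· % p ^ e) (Nat.zero_mod _)) 1)
        = (C w * φ (monomial (b.mapRange (· % p ^ e) (Nat.zero_mod _)) 1)) *
          monomial (b.mapRange (· / p ^ e) (Nat.zero_div _)) 1 := by ring
    rw [hre]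
    exact Ideal.mul_mem_left _ _ hmemb1
  -- conclude
  have hTJ : T ≤ J := Tmin J hJne hJcl
  intro y hy
  have hyJ : y ∈ Ideal.span Sg := hTJ hy
  refine Submodule.span_induction
    (p := fun z _ => (∏ i, X i : MvPolynomial (Fin d) k) * z ∈ a m) ?_ ?_ ?_ ?_ hyJ
  · rintro x ⟨e, he, rfl⟩
    show (∏ i, X i : MvPolynomial (Fin d) k) * (∏ i, X i ^ e i) ∈ a m
    have hprod : (∏ i, X i : MvPolynomial (Fin d) k) * ∏ i, X i ^ e i
        = ∏ i, X i ^ (e i + 1) := by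
      rw [← Finset.prod_mul_distrib]
      refine Finset.prod_congr rfl fun i _ => ?_
      rw [pow_add, pow_one, mul_comm]
    rw [hprod]
    refine hmema m (fun i => e i + 1) ?_
    have : (∑ i, ((e i + 1 : ℕ) : ℝ) * v i) = (∑ i, (e i : ℝ) * v i) + V := by
      rw [hVdef, ← Finset.sum_add_distrib]
      exact Finset.sum_congr rfl fun i _ => by push_cast; ring
    exact this ▸ he
  · show (∏ i, X i : MvPolynomial (Fin d) k) * 0 ∈ a m
    rw [mul_zero]
    exact Ideal.zero_mem _
  · intro x y _ _ hx hy
    show (∏ i, X i : MvPolynomial (Fin d) k) * (x + y) ∈ a m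
    rw [mul_add]
    exact Ideal.add_mem _ hx hy
  · intro r x _ hx
    show (∏ i, X i : MvPolynomial (Fin d) k) * (r • x) ∈ a m
    rw [smul_eq_mul, show (∏ i, X i : MvPolynomial (Fin d) k) * (r * x)
      = r * ((∏ i, X i : MvPolynomial (Fin d) k) * x) by ring]
    exact Ideal.mul_mem_left _ _ hx
end
end
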